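/- arXiv:1210.0771 — 4 statements merged into one kernel-verified Lean document; each statement's English description precedes it below -/
import Mathlib

section
/- Let f be a 1-periodic function in L²([0,1]) with Fourier coefficients c_k = ∫₀¹ f(t) e^{−2πikt} dt satisfying c₁ ≠ 0, let 0 < κ < 1/8, let k₀ ≥ 1 be an integer, and let θ₁*,…,θ_J* ∈ [−κ/2, κ/2]. Then for every θ = (θ₁,…,θ_J) ∈ Θ_κ one has M(θ₁,…,θ_J) − M(θ₁⁰,…,θ_J⁰) ≥ C(f,κ) · (1/J) Σ_{j=1}^J |θ_j − θ_j⁰|², where C(f,κ) = 4π²|c₁|² cos(4πκ) > 0. In particular M has a unique minimum over Θ_κ, attained at θ⁰, with M(θ⁰) = 0. -/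
open MeasureTheory ProbabilityTheory Real Finset
open scoped ENNReal NNReal

noncomputable section

/-- `2πi` as a complex number. -/
def twoPiI : ℂ := 2 * Real.pi * Complex.I

/-- The complex exponential `e^{2πikx}`. -/
def eK (k : ℤ) (x : ℝ) : ℂ := Complex.exp (twoPiI * k * x)

/-- The `k`-th Fourier coefficient `c_k = ∫₀¹ f(t) e^{-2πikt} dt` of `f : ℝ → ℝ`. -/
def fc (f : ℝ → ℝ) (k : ℤ) : ℂ :=
  ∫ t in (0:ℝ)..1, (f t : ℂ) * Complex.exp (-(twoPiI) * k * t)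

/-- The Sobolev-type ball `W̃_s(A, c_*)` of 1-periodic functions in `L²([0,1])` with
`∑ (1+|k|^{2s}) |c_k|² ≤ A²` and `|c₁| ≥ c_*`. -/
def sobolevBall (s A cstar : ℝ) : Set (ℝ → ℝ) :=
  { f | Function.Periodic f 1 ∧ Measurable f ∧
        MemLp f 2 (volume.restrict (Set.Ioc (0:ℝ) 1)) ∧
        Summable (fun k : ℤ => (1 + |(k:ℝ)| ^ (2*s)) * ‖fc f k‖ ^ 2) ∧
        (∑' k : ℤ, (1 + |(k:ℝ)| ^ (2*s)) * ‖fc f k‖ ^ 2) ≤ A ^ 2 ∧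
        cstar ≤ ‖fc f 1‖ }

/-- The constraint set `Θ_κ = { θ ∈ [-κ/2, κ/2]^J : ∑_j θ_j = 0 }`. -/
def ThetaK (κ : ℝ) (J : ℕ) : Set (Fin J → ℝ) :=
  { θ | (∀ j, θ j ∈ Set.Icc (-(κ/2)) (κ/2)) ∧ ∑ j, θ j = 0 }

/-- The centered shifts `θ_j⁰ = θ_j* - (1/J) ∑_{j'} θ_{j'}*`. -/
def theta0 (J : ℕ) (θstar : Fin J → ℝ) : Fin J → ℝ :=
  fun j => θstar j - (J:ℝ)⁻¹ * ∑ j', θstar j'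

/-- The population criterion
`M(θ) = (1/J) ∑_j ∑_{|k|≤k₀} | c_k e^{2πik(θ_j-θ_j*)} - (1/J) ∑_{j'} c_k e^{2πik(θ_{j'}-θ_{j'}*)} |²`. -/
def Mpop (f : ℝ → ℝ) (k0 J : ℕ) (θstar : Fin J → ℝ) (θ : Fin J → ℝ) : ℝ :=
  (J:ℝ)⁻¹ * ∑ j : Fin J, ∑ k ∈ Finset.Icc (-(k0:ℤ)) (k0:ℤ),
    ‖fc f k * eK k (θ j - θstar j)
      - (J:ℂ)⁻¹ * ∑ j' : Fin J, fc f k * eK k (θ j' - θstar j')‖ ^ 2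

/-! ### Auxiliary lemmas -/

lemma aux_sin_ge {x : ℝ} (hx0 : 0 ≤ x) (hx : x ≤ π/2) : x * Real.cos x ≤ Real.sin x := by
  rcases hx0.eq_or_lt with rfl | h0
  · simp
  rcases hx.eq_or_lt with rfl | h1
  · simp
  have hc : 0 < Real.cos x := Real.cos_pos_of_mem_Ioo ⟨by linarith [Real.pi_pos], h1⟩
  have ht := Real.lt_tan h0 h1
  rw [Real.tan_eq_sin_div_cos] at ht
  exact le_of_lt ((lt_div_iff₀ hc).mp ht)

lemma aux_one_sub_cos {x c : ℝ} (hxc : |x| ≤ c) (hc : c ≤ π/2) :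
    x^2/2 * Real.cos c ≤ 1 - Real.cos x := by
  have h0 : 0 ≤ |x| := abs_nonneg x
  set y := |x| with hy
  have hcx : Real.cos x = Real.cos y := (Real.cos_abs x).symm
  have hc0 : 0 ≤ c := le_trans h0 hxc
  have hy2 : y/2 ≤ π/2 := by linarith
  have hs : (y/2) * Real.cos (y/2) ≤ Real.sin (y/2) := aux_sin_ge (by linarith) hy2
  have hcos_half_nonneg : 0 ≤ Real.cos (y/2) :=
    Real.cos_nonneg_of_mem_Icc ⟨by linarith [Real.pi_pos], hy2⟩
  have hsq : ((y/2) * Real.cos (y/2))^2 ≤ Real.sin (y/2)^2 := by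
    apply sq_le_sq' _ hs
    nlinarith [Real.sin_nonneg_of_nonneg_of_le_pi (by linarith : (0:ℝ) ≤ y/2)
      (by linarith [Real.pi_pos] : y/2 ≤ π)]
  have hcosy : Real.cos y = 1 - 2 * Real.sin (y/2)^2 := by
    have h2 : Real.cos (2*(y/2)) = 1 - 2 * Real.sin (y/2)^2 := by
      rw [Real.cos_two_mul']
      nlinarith [Real.sin_sq_add_cos_sq (y/2)]
    rw [← h2]; congr 1; ring
  have hmono : Real.cos (c/2) ≤ Real.cos (y/2) :=
    Real.cos_le_cos_of_nonneg_of_le_pi (by linarith) (by linarith [Real.pi_pos]) (by linarith)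
  have hcc : Real.cos c = 2 * Real.cos (c/2)^2 - 1 := by
    have h2 : Real.cos (2*(c/2)) = 2 * Real.cos (c/2)^2 - 1 := Real.cos_two_mul (c/2)
    rw [← h2]; congr 1; ring
  have hccn : 0 ≤ Real.cos (c/2) :=
    Real.cos_nonneg_of_mem_Icc ⟨by linarith [Real.pi_pos], by linarith⟩
  have hle1 : Real.cos (c/2)^2 ≤ 1 := by nlinarith [Real.sin_sq_add_cos_sq (c/2)]
  have h5 : Real.cos (c/2)^2 ≤ Real.cos (y/2)^2 := by nlinarith
  have h6 : (y/2)^2 * Real.cos (c/2)^2 ≤ Real.sin (y/2)^2 := by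
    calc (y/2)^2 * Real.cos (c/2)^2 ≤ (y/2)^2 * Real.cos (y/2)^2 :=
          mul_le_mul_of_nonneg_left h5 (sq_nonneg _)
    _ = ((y/2) * Real.cos (y/2))^2 := by ring
    _ ≤ _ := hsq
  have hx2 : x^2 = y^2 := (sq_abs x).symm
  rw [hcx, hcosy, hcc, hx2]
  nlinarith [h6, hle1, sq_nonneg y]

lemma eK_eq (k : ℤ) (x : ℝ) : eK k x = Complex.exp (((2*Real.pi*k*x : ℝ) : ℂ) * Complex.I) := by
  unfold eK twoPiI
  congr 1
  push_cast
  ring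

lemma abs_eK (k : ℤ) (x : ℝ) : ‖eK k x‖ = 1 := by
  rw [eK_eq, Complex.norm_exp]
  simp

lemma re_eK (k : ℤ) (x : ℝ) : (eK k x).re = Real.cos (2*Real.pi*k*x) := by
  rw [eK_eq, Complex.exp_ofReal_mul_I_re]

lemma normSq_eK (k : ℤ) (x : ℝ) : Complex.normSq (eK k x) = 1 := by
  rw [← Complex.sq_norm, abs_eK]; norm_num

lemma eK_mul_conj (x y : ℝ) :
    eK 1 x * (starRingEnd ℂ) (eK 1 y) = eK 1 (x - y) := by
  rw [eK_eq, eK_eq, eK_eq, ← Complex.exp_conj, ← Complex.exp_add]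
  congr 1
  rw [map_mul, Complex.conj_I, Complex.conj_ofReal]
  push_cast
  ring

/-- **Proposition (quadratic lower bound and uniqueness of the minimizer of `M`).**
If `f` is 1-periodic, in `L²([0,1])`, with `c₁ ≠ 0`, `0 < κ < 1/8`, `k₀ ≥ 1` and
`θ₁*,…,θ_J* ∈ [-κ/2, κ/2]`, then with `C(f,κ) = 4π²|c₁|² cos(4πκ) > 0` one has
`M(θ) - M(θ⁰) ≥ C(f,κ) (1/J) ∑_j |θ_j - θ_j⁰|²` for every `θ ∈ Θ_κ`; in particular
`M(θ⁰) = 0` and `M` has a unique minimum over `Θ_κ`, attained at `θ⁰`. -/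
theorem population_criterion_quadratic_lower_bound
    (f : ℝ → ℝ) (hper : Function.Periodic f 1) (hmeas : Measurable f)
    (hL2 : MemLp f 2 (volume.restrict (Set.Ioc (0:ℝ) 1)))
    (hc1 : fc f 1 ≠ 0)
    (κ : ℝ) (hκ : 0 < κ) (hκ' : κ < 1/8)
    (k0 J : ℕ) (hk0 : 1 ≤ k0)
    (θstar : Fin J → ℝ) (hθstar : ∀ j, θstar j ∈ Set.Icc (-(κ/2)) (κ/2)) :
    (0 < 4 * Real.pi^2 * ‖fc f 1‖^2 * Real.cos (4 * Real.pi * κ)) ∧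
    (∀ θ ∈ ThetaK κ J,
      4 * Real.pi^2 * ‖fc f 1‖^2 * Real.cos (4 * Real.pi * κ)
          * ((J:ℝ)⁻¹ * ∑ j, (θ j - theta0 J θstar j) ^ 2)
        ≤ Mpop f k0 J θstar θ - Mpop f k0 J θstar (theta0 J θstar)) ∧
    Mpop f k0 J θstar (theta0 J θstar) = 0 ∧
    (∀ θ ∈ ThetaK κ J, θ ≠ theta0 J θstar →
      Mpop f k0 J θstar (theta0 J θstar) < Mpop f k0 J θstar θ) := by
  have hπ := Real.pi_pos
  have habs1 : 0 < ‖fc f 1‖ := norm_pos_iff.mpr hc1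
  have hcosκ : 0 < Real.cos (4*Real.pi*κ) := by
    apply Real.cos_pos_of_mem_Ioo
    constructor
    · nlinarith
    · nlinarith
  have hC : 0 < 4 * Real.pi^2 * ‖fc f 1‖^2 * Real.cos (4 * Real.pi * κ) := by
    apply mul_pos (mul_pos (by positivity) (pow_pos habs1 2)) hcosκ
  rcases Nat.eq_zero_or_pos J with hJ | hJpos
  · subst hJ
    refine ⟨hC, ?_, ?_, ?_⟩
    · intro θ hθ
      simp [Mpop]
    · simp [Mpop]
    · intro θ hθ hne
      exact absurd (funext fun j => j.elim0) hne
  have hJR : (0:ℝ) < (J:ℝ) := by exact_mod_cast hJpos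
  have hJne : (J:ℝ) ≠ 0 := hJR.ne'
  have hJC : ((J:ℕ):ℂ) ≠ 0 := Nat.cast_ne_zero.mpr hJpos.ne'
  -- M(θ⁰) = 0
  have hM0 : Mpop f k0 J θstar (theta0 J θstar) = 0 := by
    have harg : ∀ j : Fin J, theta0 J θstar j - θstar j = -((J:ℝ)⁻¹ * ∑ j', θstar j') := by
      intro j; simp [theta0]
    simp [Mpop, harg, Finset.sum_const, Finset.card_univ, Fintype.card_fin, nsmul_eq_mul,
      inv_mul_cancel_left₀ hJC]
  -- the key quadratic lower bound
  have key : ∀ θ ∈ ThetaK κ J,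
      4 * Real.pi^2 * ‖fc f 1‖^2 * Real.cos (4 * Real.pi * κ)
          * ((J:ℝ)⁻¹ * ∑ j, (θ j - theta0 J θstar j) ^ 2)
        ≤ Mpop f k0 J θstar θ := by
    rintro θ ⟨hθmem, hθsum⟩
    set S : ℂ := ∑ j, eK 1 (θ j - θstar j) with hS
    -- difference bound
    have hφbound : ∀ j j' : Fin J, |(θ j - θstar j) - (θ j' - θstar j')| ≤ 2*κ := by
      intro j j'
      obtain ⟨h1, h2⟩ := hθmem j
      obtain ⟨h1', h2'⟩ := hθmem j'
      obtain ⟨g1, g2⟩ := hθstar j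
      obtain ⟨g1', g2'⟩ := hθstar j'
      rw [abs_le]
      constructor <;> [skip; skip] <;> linarith
    have hDδ : ∀ j j' : Fin J, (θ j - θstar j) - (θ j' - θstar j')
        = (θ j - theta0 J θstar j) - (θ j' - theta0 J θstar j') := by
      intro j j'; unfold theta0; ring
    -- pointwise cosine bound
    have hpt : ∀ j j' : Fin J,
        2*Real.pi^2*Real.cos (4*Real.pi*κ)
            * ((θ j - theta0 J θstar j) - (θ j' - theta0 J θstar j'))^2
          ≤ 1 - (eK 1 (θ j - θstar j) * (starRingEnd ℂ) (eK 1 (θ j' - θstar j'))).re := by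
      intro j j'
      have h1 : (eK 1 (θ j - θstar j) * (starRingEnd ℂ) (eK 1 (θ j' - θstar j'))).re
          = Real.cos (2*Real.pi*((1:ℤ):ℝ)*((θ j - θstar j) - (θ j' - θstar j'))) := by
        rw [eK_mul_conj, re_eK]
      have habs : |2*Real.pi*((1:ℤ):ℝ)*((θ j - θstar j) - (θ j' - θstar j'))| ≤ 4*Real.pi*κ := by
        rw [abs_mul, abs_of_pos (by norm_num; positivity : (0:ℝ) < 2*Real.pi*((1:ℤ):ℝ))]
        have := hφbound j j'
        push_cast
        nlinarith [abs_nonneg ((θ j - θstar j) - (θ j' - θstar j'))]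
      have hcle : 4*Real.pi*κ ≤ Real.pi/2 := by nlinarith
      have hmain := aux_one_sub_cos habs hcle
      rw [h1, ← hDδ j j']
      calc 2*Real.pi^2*Real.cos (4*Real.pi*κ) * ((θ j - θstar j) - (θ j' - θstar j'))^2
          = (2*Real.pi*((1:ℤ):ℝ)*((θ j - θstar j) - (θ j' - θstar j')))^2/2
              * Real.cos (4*Real.pi*κ) := by push_cast; ring
        _ ≤ 1 - Real.cos (2*Real.pi*((1:ℤ):ℝ)*((θ j - θstar j) - (θ j' - θstar j'))) := hmain
    -- normSq S as a double sum of cosines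
    have hnS : Complex.normSq S = ∑ j, ∑ j',
        (eK 1 (θ j - θstar j) * (starRingEnd ℂ) (eK 1 (θ j' - θstar j'))).re := by
      have h1 : ((Complex.normSq S : ℝ) : ℂ)
          = ∑ j, ∑ j', eK 1 (θ j - θstar j) * (starRingEnd ℂ) (eK 1 (θ j' - θstar j')) := by
        rw [← Complex.mul_conj, hS, map_sum, Finset.sum_mul_sum]
      calc Complex.normSq S = ((Complex.normSq S : ℝ) : ℂ).re := (Complex.ofReal_re _).symm
        _ = _ := by rw [h1, Complex.re_sum]
                    exact Finset.sum_congr rfl fun j _ => Complex.re_sum _ _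
    -- cross term
    have hES : ∑ j, (eK 1 (θ j - θstar j)
          * (starRingEnd ℂ) (((J:ℕ):ℂ)⁻¹ * S)).re
        = (J:ℝ)⁻¹ * Complex.normSq S := by
      have hconj : (starRingEnd ℂ) (((J:ℕ):ℂ)⁻¹ * S)
          = ((J:ℕ):ℂ)⁻¹ * (starRingEnd ℂ) S := by
        rw [map_mul, map_inv₀, map_natCast]
      rw [hconj, ← Complex.re_sum, ← Finset.sum_mul]
      have h2 : (∑ j, eK 1 (θ j - θstar j)) * (((J:ℕ):ℂ)⁻¹ * (starRingEnd ℂ) S)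
          = (((J:ℝ)⁻¹ : ℝ) : ℂ) * ((Complex.normSq S : ℝ) : ℂ) := by
        rw [← hS, mul_left_comm, Complex.mul_conj]
        push_cast
        ring
      rw [h2, ← Complex.ofReal_mul, Complex.ofReal_re]
    have hnormm : Complex.normSq (((J:ℕ):ℂ)⁻¹ * S)
        = (J:ℝ)⁻¹ * ((J:ℝ)⁻¹ * Complex.normSq S) := by
      have hcast : ((J:ℕ):ℂ)⁻¹ = (((J:ℝ)⁻¹ : ℝ) : ℂ) := by push_cast; ring
      rw [hcast, Complex.normSq_mul, Complex.normSq_ofReal]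
      ring
    -- sum of squared deviations of the exponentials
    have hsum_inner : ∑ j, Complex.normSq (eK 1 (θ j - θstar j) - ((J:ℕ):ℂ)⁻¹ * S)
        = (J:ℝ) - (J:ℝ)⁻¹ * Complex.normSq S := by
      have hterm : ∀ j : Fin J, Complex.normSq (eK 1 (θ j - θstar j) - ((J:ℕ):ℂ)⁻¹ * S)
          = 1 + Complex.normSq (((J:ℕ):ℂ)⁻¹ * S)
            - 2 * (eK 1 (θ j - θstar j) * (starRingEnd ℂ) (((J:ℕ):ℂ)⁻¹ * S)).re := by
        intro j; rw [Complex.normSq_sub, normSq_eK]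
      rw [Finset.sum_congr rfl fun j _ => hterm j, Finset.sum_sub_distrib,
        Finset.sum_const, Finset.card_univ, Fintype.card_fin, nsmul_eq_mul, ← Finset.mul_sum,
        hES, hnormm]
      field_simp
      ring
    -- one term of the k-sum
    have h1mem : (1:ℤ) ∈ Finset.Icc (-(k0:ℤ)) (k0:ℤ) := by
      have hk0' : (1:ℤ) ≤ (k0:ℤ) := by exact_mod_cast hk0
      simp only [Finset.mem_Icc]
      omega
    have stepA : (J:ℝ)⁻¹ * ∑ j, ‖(fc f 1 * eK 1 (θ j - θstar j)
          - (J:ℂ)⁻¹ * ∑ j', fc f 1 * eK 1 (θ j' - θstar j'))‖^2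
        ≤ Mpop f k0 J θstar θ := by
      apply mul_le_mul_of_nonneg_left _ (by positivity : (0:ℝ) ≤ (J:ℝ)⁻¹)
      apply Finset.sum_le_sum
      intro j _
      exact Finset.single_le_sum (f := fun k : ℤ => ‖(fc f k * eK k (θ j - θstar j)
        - (J:ℂ)⁻¹ * ∑ j', fc f k * eK k (θ j' - θstar j'))‖^2)
        (fun k _ => by positivity) h1mem
    have stepB : ∀ j : Fin J, ‖(fc f 1 * eK 1 (θ j - θstar j)
          - (J:ℂ)⁻¹ * ∑ j', fc f 1 * eK 1 (θ j' - θstar j'))‖^2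
        = ‖fc f 1‖^2
          * Complex.normSq (eK 1 (θ j - θstar j) - ((J:ℕ):ℂ)⁻¹ * S) := by
      intro j
      have h3 : fc f 1 * eK 1 (θ j - θstar j)
            - (J:ℂ)⁻¹ * ∑ j', fc f 1 * eK 1 (θ j' - θstar j')
          = fc f 1 * (eK 1 (θ j - θstar j) - ((J:ℕ):ℂ)⁻¹ * S) := by
        rw [← Finset.mul_sum, ← hS]
        ring
      rw [h3, norm_mul, mul_pow, Complex.sq_norm, Complex.sq_norm]
    -- sum of centered squares
    have hδ0 : ∑ j, (θ j - theta0 J θstar j) = 0 := by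
      have h1 : ∑ j, theta0 J θstar j = 0 := by
        unfold theta0
        rw [Finset.sum_sub_distrib, Finset.sum_const, Finset.card_univ, Fintype.card_fin,
          nsmul_eq_mul]
        field_simp
        ring
      rw [Finset.sum_sub_distrib, hθsum, h1, sub_zero]
    have hDsum : ∑ j, ∑ j', ((θ j - theta0 J θstar j) - (θ j' - theta0 J θstar j'))^2
        = 2*(J:ℝ)*(∑ j, (θ j - theta0 J θstar j)^2) := by
      have inner : ∀ j : Fin J, ∑ j', ((θ j - theta0 J θstar j) - (θ j' - theta0 J θstar j'))^2
          = (J:ℝ) * (θ j - theta0 J θstar j)^2 + ∑ j', (θ j' - theta0 J θstar j')^2 := by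
        intro j
        have h4 : ∀ j' : Fin J, ((θ j - theta0 J θstar j) - (θ j' - theta0 J θstar j'))^2
            = (θ j - theta0 J θstar j)^2
              - 2*(θ j - theta0 J θstar j)*(θ j' - theta0 J θstar j')
              + (θ j' - theta0 J θstar j')^2 := fun j' => by ring
        rw [Finset.sum_congr rfl fun j' _ => h4 j', Finset.sum_add_distrib,
          Finset.sum_sub_distrib, Finset.sum_const, Finset.card_univ, Fintype.card_fin,
          nsmul_eq_mul, ← Finset.mul_sum, hδ0]
        ring
      rw [Finset.sum_congr rfl fun j _ => inner j, Finset.sum_add_distrib,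
        Finset.sum_const, Finset.card_univ, Fintype.card_fin, nsmul_eq_mul, ← Finset.mul_sum]
      ring
    have hD2 : ∑ j, ∑ j', (2*Real.pi^2*Real.cos (4*Real.pi*κ)
          * ((θ j - theta0 J θstar j) - (θ j' - theta0 J θstar j'))^2)
        = 2*Real.pi^2*Real.cos (4*Real.pi*κ)
          * (2*(J:ℝ)*(∑ j, (θ j - theta0 J θstar j)^2)) := by
      simp only [← Finset.mul_sum]
      rw [hDsum]
    have hX : ∑ j, ∑ j', ((1:ℝ)
          - (eK 1 (θ j - θstar j) * (starRingEnd ℂ) (eK 1 (θ j' - θstar j'))).re)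
        = (J:ℝ)*(J:ℝ) - Complex.normSq S := by
      simp only [Finset.sum_sub_distrib, Finset.sum_const, Finset.card_univ, Fintype.card_fin,
        nsmul_eq_mul, mul_one]
      rw [hnS]
    calc 4 * Real.pi^2 * ‖fc f 1‖^2 * Real.cos (4 * Real.pi * κ)
          * ((J:ℝ)⁻¹ * ∑ j, (θ j - theta0 J θstar j) ^ 2)
        = (J:ℝ)⁻¹ * ((J:ℝ)⁻¹ * (‖fc f 1‖^2
            * ∑ j, ∑ j', (2*Real.pi^2*Real.cos (4*Real.pi*κ)
              * ((θ j - theta0 J θstar j) - (θ j' - theta0 J θstar j'))^2))) := by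
          rw [hD2]; field_simp; ring
      _ ≤ (J:ℝ)⁻¹ * ((J:ℝ)⁻¹ * (‖fc f 1‖^2
            * ∑ j, ∑ j', ((1:ℝ)
              - (eK 1 (θ j - θstar j) * (starRingEnd ℂ) (eK 1 (θ j' - θstar j'))).re))) := by
          gcongr with j _ j' _
          exact hpt j j'
      _ = (J:ℝ)⁻¹ * (‖fc f 1‖^2
            * ((J:ℝ) - (J:ℝ)⁻¹ * Complex.normSq S)) := by
          rw [hX]; field_simp
      _ = (J:ℝ)⁻¹ * (‖fc f 1‖^2
            * ∑ j, Complex.normSq (eK 1 (θ j - θstar j) - ((J:ℕ):ℂ)⁻¹ * S)) := by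
          rw [hsum_inner]
      _ = (J:ℝ)⁻¹ * ∑ j, ‖(fc f 1 * eK 1 (θ j - θstar j)
            - (J:ℂ)⁻¹ * ∑ j', fc f 1 * eK 1 (θ j' - θstar j'))‖^2 := by
          congr 1
          rw [Finset.mul_sum]
          exact Finset.sum_congr rfl fun j _ => (stepB j).symm
      _ ≤ Mpop f k0 J θstar θ := stepA
  refine ⟨hC, ?_, hM0, ?_⟩
  · intro θ hθ
    rw [hM0, sub_zero]
    exact key θ hθ
  · intro θ hθ hne
    have hσpos : 0 < ∑ j, (θ j - theta0 J θstar j)^2 := by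
      have hex : ∃ j, θ j ≠ theta0 J θstar j := by
        by_contra h
        push_neg at h
        exact hne (funext h)
      obtain ⟨j, hj⟩ := hex
      have hd : θ j - theta0 J θstar j ≠ 0 := sub_ne_zero.mpr hj
      have h5 : 0 < (θ j - theta0 J θstar j)^2 := by positivity
      exact lt_of_lt_of_le h5
        (Finset.single_le_sum (f := fun i => (θ i - theta0 J θstar i)^2) (fun i _ => sq_nonneg _) (Finset.mem_univ j))
    calc Mpop f k0 J θstar (theta0 J θstar) = 0 := hM0
      _ < 4 * Real.pi^2 * ‖fc f 1‖^2 * Real.cos (4 * Real.pi * κ)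
          * ((J:ℝ)⁻¹ * ∑ j, (θ j - theta0 J θstar j)^2) :=
        mul_pos hC (mul_pos (inv_pos.mpr hJR) hσpos)
      _ ≤ Mpop f k0 J θstar θ := key θ hθ
end
end

section
/- Let f ∈ W̃_s(A,c_*) with s > 1/2 be given by its (everywhere convergent) Fourier series. Then there exists a constant A₀ > 0 depending only on A and s such that for every even n = 2N with N ≥ 2, every θ_j* ∈ [−1/2,1/2], every j and both p ∈ {0,1}: max_{−N/2 ≤ k < N/2} | c̄^{(p)}_{k,j} − c_k e^{−2iπk θ_j*} | ≤ A₀ N^{−s+1/2}, where c̄^{(p)}_{k,j} = (1/N) Σ_{q=1}^N f(t_q^{(p)} − θ_j*) e^{−2πik t_q^{(p)}}. -/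
open MeasureTheory ProbabilityTheory Real Finset
open scoped ENNReal NNReal

noncomputable section

/-- The design points `t_q^{(p)} = (2q - p)/n`, `q = 1,…,N`, `n = 2N`, `p ∈ {0,1}`. -/
def tpt (N : ℕ) (p : ℕ) (q : Fin N) : ℝ := ((2 * (q.1 + 1) : ℕ) - (p:ℝ)) / (2 * N)

/-- The noiseless discrete Fourier coefficients
`c̄^{(p)}_{k,j} = (1/N) ∑_{q=1}^N f(t_q^{(p)} - θ_j*) e^{-2πik t_q^{(p)}}`. -/
def cbar (f : ℝ → ℝ) (N J : ℕ) (p : ℕ) (θstar : Fin J → ℝ) (k : ℤ) (j : Fin J) : ℂ :=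
  (N:ℂ)⁻¹ * ∑ q : Fin N, ((f (tpt N p q - θstar j) : ℝ) : ℂ)
    * Complex.exp (-(twoPiI) * k * tpt N p q)


/-! ### Auxiliary lemmas -/

lemma Ssum_dvd (N : ℕ) (hN : 0 < N) (p : ℕ) (l : ℤ) :
    ∑ q : Fin N, Complex.exp (twoPiI * (((N:ℤ)*l : ℤ) : ℂ) * tpt N p q)
      = N * Complex.exp ((-(Real.pi * l * p) : ℝ) * Complex.I) := by
  have hNC : ((N:ℂ)) ≠ 0 := Nat.cast_ne_zero.2 hN.ne'
  have hterm : ∀ q : Fin N, Complex.exp (twoPiI * (((N:ℤ)*l : ℤ) : ℂ) * tpt N p q)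
      = Complex.exp ((-(Real.pi * l * p) : ℝ) * Complex.I) := by
    intro q
    have harg : twoPiI * (((N:ℤ)*l : ℤ) : ℂ) * (tpt N p q : ℝ)
        = ((l*(q.1+1) : ℤ) : ℂ) * (2 * Real.pi * Complex.I)
          + ((-(Real.pi * l * p) : ℝ) * Complex.I) := by
      unfold twoPiI tpt
      push_cast
      field_simp
      ring
    rw [harg, Complex.exp_add, Complex.exp_int_mul_two_pi_mul_I, one_mul]
  simp only [hterm, Finset.sum_const, Finset.card_univ, Fintype.card_fin, nsmul_eq_mul]

lemma Ssum_not_dvd (N : ℕ) (hN : 0 < N) (p : ℕ) (d : ℤ) (hd : ¬ (N:ℤ) ∣ d) :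
    ∑ q : Fin N, Complex.exp (twoPiI * d * tpt N p q) = 0 := by
  have hNC : ((N:ℂ)) ≠ 0 := Nat.cast_ne_zero.2 hN.ne'
  set ω : ℂ := Complex.exp (twoPiI * d / N) with hω
  have hω1 : ω ≠ 1 := by
    intro h
    rw [hω, Complex.exp_eq_one_iff] at h
    obtain ⟨n, hn⟩ := h
    apply hd
    refine ⟨n, ?_⟩
    have h2πI : (2 * (Real.pi:ℂ) * Complex.I) ≠ 0 := by
      simp [Complex.I_ne_zero, Real.pi_ne_zero, Complex.ofReal_ne_zero]
    have hdc : (d : ℂ) = (n:ℂ) * N := by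
      field_simp [twoPiI] at hn
      apply mul_left_cancel₀ h2πI
      unfold twoPiI at hn; linear_combination hn
    have : (d:ℂ) = ((N*n : ℤ):ℂ) := by push_cast; rw [hdc]; ring
    exact_mod_cast this
  have hωN : ω ^ N = 1 := by
    rw [hω, ← Complex.exp_nat_mul]
    have : (N:ℂ) * (twoPiI * d / N) = (d:ℂ) * (2 * Real.pi * Complex.I) := by
      field_simp [twoPiI]; unfold twoPiI; ring
    rw [this, Complex.exp_int_mul_two_pi_mul_I]
  set C : ℂ := Complex.exp (-(twoPiI) * d * p / (2*N)) with hC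
  have hterm : ∀ q : Fin N, Complex.exp (twoPiI * d * tpt N p q) = ω ^ (q.1+1) * C := by
    intro q
    rw [hω, hC, ← Complex.exp_nat_mul, ← Complex.exp_add]
    congr 1
    unfold twoPiI tpt
    push_cast
    field_simp
    ring
  calc ∑ q : Fin N, Complex.exp (twoPiI * d * tpt N p q)
      = ∑ q : Fin N, ω ^ (q.1+1) * C := by simp only [hterm]
    _ = (∑ q ∈ Finset.range N, ω ^ (q+1)) * C := by
        rw [← Finset.sum_mul]; congr 1
        exact (Fin.sum_univ_eq_sum_range (fun q => ω ^ (q+1)) N)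
    _ = 0 := by
        have h5 : ∑ q ∈ Finset.range N, ω ^ (q+1) = ω * ∑ q ∈ Finset.range N, ω ^ q := by
          rw [Finset.mul_sum]; exact Finset.sum_congr rfl (by intros; ring)
        rw [h5, geom_sum_eq hω1, hωN]
        simp

lemma tsum_cs {ι : Type*} (u v : ι → ℝ) (hu : ∀ i, 0 ≤ u i) (hv : ∀ i, 0 ≤ v i)
    (h2u : Summable fun i => u i ^ 2) (h2v : Summable fun i => v i ^ 2) :
    Summable (fun i => u i * v i) ∧
      ∑' i, u i * v i ≤ Real.sqrt (∑' i, u i ^ 2) * Real.sqrt (∑' i, v i ^ 2) := by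
  have hbd : ∀ i, u i * v i ≤ (u i ^ 2 + v i ^ 2) / 2 := by
    intro i; nlinarith [two_mul_le_add_sq (u i) (v i)]
  have hsum : Summable (fun i => u i * v i) :=
    Summable.of_nonneg_of_le (fun i => mul_nonneg (hu i) (hv i)) hbd ((h2u.add h2v).div_const 2)
  refine ⟨hsum, Summable.tsum_le_of_sum_le hsum fun F => ?_⟩
  have h1 : (∑ i ∈ F, u i * v i) ^ 2 ≤ (∑ i ∈ F, u i ^ 2) * ∑ i ∈ F, v i ^ 2 :=
    Finset.sum_mul_sq_le_sq_mul_sq F u v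
  have hF1 : ∑ i ∈ F, u i ^ 2 ≤ ∑' i, u i ^ 2 := Summable.sum_le_tsum F (fun i _ => sq_nonneg _) h2u
  have hF2 : ∑ i ∈ F, v i ^ 2 ≤ ∑' i, v i ^ 2 := Summable.sum_le_tsum F (fun i _ => sq_nonneg _) h2v
  have hnn : 0 ≤ ∑ i ∈ F, u i * v i :=
    Finset.sum_nonneg fun i _ => mul_nonneg (hu i) (hv i)
  calc ∑ i ∈ F, u i * v i = Real.sqrt ((∑ i ∈ F, u i * v i) ^ 2) := (Real.sqrt_sq hnn).symm
    _ ≤ Real.sqrt ((∑ i ∈ F, u i ^ 2) * ∑ i ∈ F, v i ^ 2) := Real.sqrt_le_sqrt h1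
    _ = Real.sqrt (∑ i ∈ F, u i ^ 2) * Real.sqrt (∑ i ∈ F, v i ^ 2) :=
        Real.sqrt_mul (Finset.sum_nonneg fun i _ => sq_nonneg _) _
    _ ≤ Real.sqrt (∑' i, u i ^ 2) * Real.sqrt (∑' i, v i ^ 2) :=
        mul_le_mul (Real.sqrt_le_sqrt hF1) (Real.sqrt_le_sqrt hF2)
          (Real.sqrt_nonneg _) (Real.sqrt_nonneg _)

/-- **Lemma (discrete vs. continuous Fourier coefficients).**
If `f ∈ W̃_s(A,c_*)` with `s > 1/2` is given by its everywhere convergent Fourier series, then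
there is `A₀ > 0`, depending only on `A` and `s`, such that for every even `n = 2N` with `N ≥ 2`,
every `θ_j* ∈ [-1/2,1/2]`, every `j`, both `p ∈ {0,1}` and every `-N/2 ≤ k < N/2`:
`| c̄^{(p)}_{k,j} - c_k e^{-2πik θ_j*} | ≤ A₀ N^{-s+1/2}`. -/
theorem discrete_fourier_coefficient_approximation
    (A s : ℝ) (hA : 0 < A) (hs : 1/2 < s) :
    ∃ A0 : ℝ, 0 < A0 ∧
      ∀ (cstar : ℝ) (f : ℝ → ℝ), f ∈ sobolevBall s A cstar →
      (∀ t : ℝ, Summable (fun k : ℤ => fc f k * eK k t) ∧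
        ((f t : ℂ) = ∑' k : ℤ, fc f k * eK k t)) →
      ∀ (N J : ℕ), 2 ≤ N →
      ∀ θstar : Fin J → ℝ, (∀ j, θstar j ∈ Set.Icc (-(1:ℝ)/2) (1/2)) →
      ∀ (j : Fin J) (p : ℕ), p ≤ 1 →
      ∀ k : ℤ, -(N:ℤ) ≤ 2*k → 2*k < (N:ℤ) →
      ‖cbar f N J p θstar k j - fc f k * Complex.exp (-(twoPiI) * k * (θstar j : ℝ))‖
        ≤ A0 * (N:ℝ) ^ (-s + 1/2) := by
  classical
  have h2s : (1:ℝ) < 2*s := by linarith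
  have h2s0 : (2*s) ≠ 0 := by linarith
  set Z : ℝ := ∑' l : ℤ, |(l:ℝ)| ^ (-(2*s)) with hZdef
  have hZsum : Summable (fun l : ℤ => |(l:ℝ)| ^ (-(2*s))) := Real.summable_abs_int_rpow h2s
  have hZnn : 0 ≤ Z := tsum_nonneg fun l => Real.rpow_nonneg (abs_nonneg _) _
  refine ⟨A * 2 ^ s * (Real.sqrt Z + 1), by positivity, ?_⟩
  intro cstar f hf hrep N J hN θstar hθ j p hp k hk1 hk2
  obtain ⟨hper, hmeas, hmem, hsumw, hsumw_le, hc1⟩ := hf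
  have hNpos : 0 < N := by omega
  have hNC : ((N:ℂ)) ≠ 0 := Nat.cast_ne_zero.2 hNpos.ne'
  have hNR : (2:ℝ) ≤ (N:ℝ) := by exact_mod_cast hN
  set w : ℤ → ℝ := fun m => 1 + |(m:ℝ)| ^ (2*s) with hwdef
  set c : ℤ → ℂ := fc f with hcdef
  have hwpos : ∀ m, 0 < w m := fun m => by
    have : 0 ≤ |(m:ℝ)| ^ (2*s) := Real.rpow_nonneg (abs_nonneg _) _
    simp only [hwdef]; linarith
  have hsumw' : Summable (fun m : ℤ => w m * ‖c m‖ ^ 2) := hsumw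
  have hsumw_le' : (∑' m : ℤ, w m * ‖c m‖ ^ 2) ≤ A ^ 2 := hsumw_le
  -- summability of `(w m)⁻¹` and of `|c m|`
  have hinv : Summable (fun m : ℤ => (w m)⁻¹) := by
    have haux : Summable (fun m : ℤ => |(m:ℝ)| ^ (-(2*s)) + (if m = 0 then (1:ℝ) else 0)) :=
      hZsum.add (summable_of_ne_finset_zero (s := {0})
        (by intro b hb; simp only [Finset.mem_singleton] at hb; simp [hb]))
    refine Summable.of_nonneg_of_le (fun m => inv_nonneg.2 (hwpos m).le) (fun m => ?_) haux
    by_cases hm : m = 0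
    · subst hm
      simp [hwdef, Real.zero_rpow h2s0]
      positivity
    · have hm1 : (1:ℝ) ≤ |(m:ℝ)| := by
        have h1 : (1:ℤ) ≤ |m| := Int.one_le_abs (by exact_mod_cast hm)
        calc (1:ℝ) = ((1:ℤ):ℝ) := by norm_num
          _ ≤ ((|m|:ℤ):ℝ) := by exact_mod_cast h1
          _ = |(m:ℝ)| := by push_cast; ring
      have hx : 0 < |(m:ℝ)| ^ (2*s) := Real.rpow_pos_of_pos (by linarith) _
      have hle : (w m)⁻¹ ≤ (|(m:ℝ)| ^ (2*s))⁻¹ := by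
        apply inv_anti₀ hx
        simp only [hwdef]; linarith
      calc (w m)⁻¹ ≤ (|(m:ℝ)| ^ (2*s))⁻¹ := hle
        _ = |(m:ℝ)| ^ (-(2*s)) := (Real.rpow_neg (abs_nonneg _) _).symm
        _ ≤ _ := by simp [hm]
  have habs_sum : Summable (fun m : ℤ => ‖c m‖) := by
    refine Summable.of_nonneg_of_le (fun m => norm_nonneg _) (fun m => ?_)
      ((hsumw'.add hinv).div_const 2)
    have h1 := two_mul_le_add_sq (Real.sqrt (w m) * ‖c m‖) (Real.sqrt ((w m)⁻¹))
    have hww : Real.sqrt (w m) * Real.sqrt ((w m)⁻¹) = 1 := by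
      rw [← Real.sqrt_mul (hwpos m).le, mul_inv_cancel₀ (hwpos m).ne', Real.sqrt_one]
    have h2 : (Real.sqrt (w m) * ‖c m‖)^2 = w m * ‖c m‖ ^ 2 := by
      rw [mul_pow, Real.sq_sqrt (hwpos m).le]
    have h3 : (Real.sqrt ((w m)⁻¹))^2 = (w m)⁻¹ := Real.sq_sqrt (inv_nonneg.2 (hwpos m).le)
    have h4 : 2 * (Real.sqrt (w m) * ‖c m‖) * Real.sqrt ((w m)⁻¹)
        = 2 * ‖c m‖ := by
      calc 2 * (Real.sqrt (w m) * ‖c m‖) * Real.sqrt ((w m)⁻¹)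
          = 2 * ‖c m‖ * (Real.sqrt (w m) * Real.sqrt ((w m)⁻¹)) := by ring
        _ = 2 * ‖c m‖ := by rw [hww, mul_one]
    rw [h4, h2, h3] at h1
    linarith
  -- the aliased periodization identity
  set e : ℤ → ℤ := fun l => k + l * N with hedef
  have he : Function.Injective e := by
    intro a b hab
    simp only [hedef, add_right_inj] at hab
    exact mul_right_cancel₀ (by exact_mod_cast hNpos.ne') hab
  set S : ℤ → ℂ := fun d => ∑ q : Fin N, Complex.exp (twoPiI * d * tpt N p q) with hSdef
  set h : ℤ → ℂ := fun m => c m * Complex.exp (-(twoPiI) * m * (θstar j : ℝ))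
      * ((N:ℂ)⁻¹ * S (m - k)) with hhdef
  have hSabs : ∀ d, ‖(N:ℂ)⁻¹ * S d‖ ≤ 1 := by
    intro d
    by_cases hd : (N:ℤ) ∣ d
    · obtain ⟨l, rfl⟩ := hd
      have := Ssum_dvd N hNpos p l
      simp only [hSdef]
      rw [this, norm_mul, norm_mul, norm_inv, Complex.norm_natCast,
        Complex.norm_exp_ofReal_mul_I, mul_one,
        inv_mul_cancel₀ (by positivity : ((N:ℝ)) ≠ 0)]
    · simp only [hSdef]
      rw [Ssum_not_dvd N hNpos p d hd, mul_zero, norm_zero]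
      norm_num
  have hS0 : (N:ℂ)⁻¹ * S 0 = 1 := by
    simp only [hSdef]
    simp only [Int.cast_zero, mul_zero, zero_mul, Complex.exp_zero, Finset.sum_const,
      Finset.card_univ, Fintype.card_fin, nsmul_eq_mul, mul_one]
    exact inv_mul_cancel₀ hNC
  have hsupp : ∀ m, m ∉ Set.range e → h m = 0 := by
    intro m hm
    have hdvd : ¬ (N:ℤ) ∣ (m - k) := by
      rintro ⟨l, hl⟩
      exact hm ⟨l, by simp only [hedef]; rw [mul_comm l (N:ℤ)]; linarith⟩
    simp only [hhdef, hSdef]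
    rw [Ssum_not_dvd N hNpos p (m - k) hdvd, mul_zero, mul_zero]
  have hhabs : ∀ m, ‖h m‖ ≤ ‖c m‖ := by
    intro m
    have harg : (-(twoPiI) * (m:ℂ) * ((θstar j : ℝ):ℂ))
        = ((-(2*Real.pi*(m:ℝ)*(θstar j)) : ℝ)) * Complex.I := by
      unfold twoPiI; push_cast; ring
    calc ‖h m‖
        = ‖c m‖ * 1 * ‖(N:ℂ)⁻¹ * S (m - k)‖ := by
          simp only [hhdef]
          rw [norm_mul, norm_mul, harg, Complex.norm_exp_ofReal_mul_I]
      _ ≤ ‖c m‖ * 1 * 1 := by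
          have := hSabs (m - k)
          have h0 : (0:ℝ) ≤ ‖c m‖ * 1 := by positivity
          exact mul_le_mul_of_nonneg_left this h0
      _ = ‖c m‖ := by ring
  have hhsum : Summable h :=
    Summable.of_norm_bounded habs_sum (fun m => by exact hhabs m)
  -- Step A: `cbar = ∑' m, h m`
  have hA1 : cbar f N J p θstar k j = ∑' m : ℤ, h m := by
    unfold cbar
    have hq : ∀ q ∈ (Finset.univ : Finset (Fin N)),
        ((f (tpt N p q - θstar j) : ℝ) : ℂ) * Complex.exp (-(twoPiI) * k * tpt N p q)
        = ∑' m : ℤ, (c m * eK m (tpt N p q - θstar j)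
            * Complex.exp (-(twoPiI) * k * tpt N p q)) := by
      intro q _
      rw [(hrep (tpt N p q - θstar j)).2, tsum_mul_right]
    rw [Finset.sum_congr rfl hq]
    have hsq : ∀ q ∈ (Finset.univ : Finset (Fin N)),
        Summable (fun m : ℤ => c m * eK m (tpt N p q - θstar j)
          * Complex.exp (-(twoPiI) * k * tpt N p q)) := by
      intro q _
      exact ((hrep (tpt N p q - θstar j)).1).mul_right _
    rw [← Summable.tsum_finsetSum hsq, ← tsum_mul_left]
    apply tsum_congr
    intro m
    have hqq : ∀ q ∈ (Finset.univ : Finset (Fin N)),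
        c m * eK m (tpt N p q - θstar j) * Complex.exp (-(twoPiI) * k * tpt N p q)
        = (c m * Complex.exp (-(twoPiI) * m * ((θstar j : ℝ):ℂ)))
            * Complex.exp (twoPiI * ((m - k : ℤ):ℂ) * tpt N p q) := by
      intro q _
      unfold eK
      rw [mul_assoc (c m), mul_assoc (c m), ← Complex.exp_add, ← Complex.exp_add]
      congr 1
      push_cast
      ring
    rw [Finset.sum_congr rfl hqq, ← Finset.mul_sum]
    simp only [hhdef, hSdef]
    ring
  -- Step B: reindex over the lattice `k + l*N`
  have hHasSum : HasSum (h ∘ e) (∑' m : ℤ, h m) :=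
    (Function.Injective.hasSum_iff he hsupp).mpr hhsum.hasSum
  have hsum_he : Summable (h ∘ e) := hHasSum.summable
  have htsum_he : ∑' l : ℤ, h (e l) = ∑' m : ℤ, h m := hHasSum.tsum_eq
  -- Step C: the error is the sum over nonzero `l`
  have he0 : h (e 0) = fc f k * Complex.exp (-(twoPiI) * k * ((θstar j : ℝ):ℂ)) := by
    have h00 : e 0 = k := by simp [hedef]
    rw [h00]
    simp only [hhdef]
    rw [sub_self, hS0, mul_one, hcdef]
  have herr : cbar f N J p θstar k j
        - fc f k * Complex.exp (-(twoPiI) * k * ((θstar j : ℝ):ℂ))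
      = ∑' l : ℤ, (if l = 0 then 0 else h (e l)) := by
    have hsplit := Summable.tsum_eq_add_tsum_ite hsum_he 0
    simp only [Function.comp] at hsplit
    rw [hA1, ← htsum_he, hsplit, he0]
    ring
  -- Step D: termwise bound
  set u : ℤ → ℝ := fun l => Real.sqrt (w (e l)) * ‖c (e l)‖ with hudef
  set v : ℤ → ℝ := fun l => ((N:ℝ)/2) ^ (-s) * |(l:ℝ)| ^ (-s) with hvdef
  have hupos : ∀ l, 0 ≤ u l := fun l =>
    mul_nonneg (Real.sqrt_nonneg _) (norm_nonneg _)
  have hvpos : ∀ l, 0 ≤ v l := fun l =>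
    mul_nonneg (Real.rpow_nonneg (by positivity) _) (Real.rpow_nonneg (abs_nonneg _) _)
  have hN2 : (0:ℝ) < (N:ℝ)/2 := by linarith
  have hgb : ∀ l : ℤ, ‖if l = 0 then 0 else h (e l)‖ ≤ u l * v l := by
    intro l
    by_cases hl : l = 0
    · subst hl
      rw [if_pos rfl, norm_zero]
      have hv0 : v 0 = 0 := by
        simp only [hvdef]
        rw [show |((0:ℤ):ℝ)| = (0:ℝ) by norm_num, Real.zero_rpow (by linarith : -s ≠ 0),
          mul_zero]
      rw [hv0, mul_zero]
    · rw [if_neg hl]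
      have hl1 : (1:ℝ) ≤ |(l:ℝ)| := by
        have h1 : (1:ℤ) ≤ |l| := Int.one_le_abs (by exact_mod_cast hl)
        calc (1:ℝ) = ((1:ℤ):ℝ) := by norm_num
          _ ≤ ((|l|:ℤ):ℝ) := by exact_mod_cast h1
          _ = |(l:ℝ)| := by push_cast; ring
      have hkabs : |(k:ℝ)| ≤ (N:ℝ)/2 := by
        rw [abs_le]
        constructor
        · have : (-(N:ℤ):ℝ) ≤ ((2*k : ℤ):ℝ) := by exact_mod_cast hk1
          push_cast at this; linarith
        · have : ((2*k : ℤ):ℝ) ≤ ((N:ℤ):ℝ) := by exact_mod_cast hk2.le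
          push_cast at this; linarith
      have helr : ((e l : ℤ):ℝ) = (k:ℝ) + (l:ℝ)*(N:ℝ) := by
        simp only [hedef]; push_cast; ring
      have habs_m : ((N:ℝ)/2) * |(l:ℝ)| ≤ |((e l : ℤ):ℝ)| := by
        have habs1 : |(l:ℝ)*(N:ℝ)| - |(-(k:ℝ))| ≤ |(l:ℝ)*(N:ℝ) - (-(k:ℝ))| :=
          abs_sub_abs_le_abs_sub _ _
        rw [abs_mul, abs_neg] at habs1
        have hNabs : |(N:ℝ)| = (N:ℝ) := abs_of_nonneg (by linarith)
        rw [hNabs] at habs1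
        have heq : |(l:ℝ)*(N:ℝ) - (-(k:ℝ))| = |((e l : ℤ):ℝ)| := by
          rw [helr]; congr 1; ring
        rw [heq] at habs1
        nlinarith [hl1, abs_nonneg ((l:ℝ))]
      have hmpos : (0:ℝ) < |((e l : ℤ):ℝ)| :=
        lt_of_lt_of_le (by positivity) habs_m
      have hsq : |((e l : ℤ):ℝ)| ^ s ≤ Real.sqrt (w (e l)) := by
        have h1 : |((e l : ℤ):ℝ)| ^ (2*s) = (|((e l : ℤ):ℝ)| ^ s)^2 := by
          rw [sq, ← Real.rpow_add hmpos]; congr 1; ring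
        have h2 : Real.sqrt (|((e l : ℤ):ℝ)| ^ (2*s)) = |((e l : ℤ):ℝ)| ^ s := by
          rw [h1, Real.sqrt_sq (Real.rpow_nonneg (abs_nonneg _) _)]
        rw [← h2]
        apply Real.sqrt_le_sqrt
        simp only [hwdef]; linarith
      have hvv : |((e l : ℤ):ℝ)| ^ (-s) ≤ v l := by
        simp only [hvdef]
        calc |((e l : ℤ):ℝ)| ^ (-s)
            ≤ (((N:ℝ)/2) * |(l:ℝ)|) ^ (-s) :=
              Real.rpow_le_rpow_of_nonpos (by positivity) habs_m (by linarith)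
          _ = ((N:ℝ)/2) ^ (-s) * |(l:ℝ)| ^ (-s) := Real.mul_rpow hN2.le (abs_nonneg _)
      have hcancel : |((e l : ℤ):ℝ)| ^ s * |((e l : ℤ):ℝ)| ^ (-s) = 1 := by
        rw [← Real.rpow_add hmpos]; norm_num
      calc ‖h (e l)‖ ≤ ‖c (e l)‖ := hhabs _
        _ = ‖c (e l)‖ * (|((e l : ℤ):ℝ)| ^ s * |((e l : ℤ):ℝ)| ^ (-s)) := by
            rw [hcancel, mul_one]
        _ = (‖c (e l)‖ * |((e l : ℤ):ℝ)| ^ s) * |((e l : ℤ):ℝ)| ^ (-s) := by ring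
        _ ≤ (‖c (e l)‖ * Real.sqrt (w (e l))) * v l := by
            apply mul_le_mul
            · exact mul_le_mul_of_nonneg_left hsq (norm_nonneg _)
            · exact hvv
            · exact Real.rpow_nonneg (abs_nonneg _) _
            · positivity
        _ = u l * v l := by simp only [hudef]; ring
  -- summability of the squares
  have h2u : Summable (fun l : ℤ => u l ^ 2) := by
    have heq : ∀ l : ℤ, u l ^ 2 = ((fun m => w m * ‖c m‖ ^ 2) ∘ e) l := by
      intro l
      simp only [hudef, Function.comp]
      rw [mul_pow, Real.sq_sqrt (hwpos _).le]
    exact (hsumw'.comp_injective he).congr (fun l => (heq l).symm)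
  have h2u_le : ∑' l : ℤ, u l ^ 2 ≤ A ^ 2 := by
    have heq : ∀ l : ℤ, u l ^ 2 = w (e l) * ‖c (e l)‖ ^ 2 := by
      intro l
      simp only [hudef]
      rw [mul_pow, Real.sq_sqrt (hwpos _).le]
    calc ∑' l : ℤ, u l ^ 2 ≤ ∑' m : ℤ, w m * ‖c m‖ ^ 2 :=
          Summable.tsum_le_tsum_of_inj e he (fun m _ => by positivity)
            (fun l => le_of_eq (heq l)) h2u hsumw'
      _ ≤ A ^ 2 := hsumw_le'
  have hv2eq : ∀ l : ℤ, v l ^ 2 = (((N:ℝ)/2) ^ (-s))^2 * |(l:ℝ)| ^ (-(2*s)) := by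
    intro l
    simp only [hvdef]
    rw [mul_pow]
    congr 1
    rw [← Real.rpow_natCast (|(l:ℝ)| ^ (-s)) 2, ← Real.rpow_mul (abs_nonneg _)]
    norm_num
    congr 1
    ring
  have h2v : Summable (fun l : ℤ => v l ^ 2) :=
    ((hZsum.mul_left ((((N:ℝ)/2) ^ (-s))^2)).congr (fun l => (hv2eq l).symm))
  have h2v_eq : ∑' l : ℤ, v l ^ 2 = (((N:ℝ)/2) ^ (-s))^2 * Z := by
    rw [tsum_congr hv2eq, tsum_mul_left]
  -- assemble the final bound
  obtain ⟨hsum_uv, hcs⟩ := tsum_cs u v hupos hvpos h2u h2v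
  have hnormsum : Summable (fun l : ℤ => ‖(if l = 0 then 0 else h (e l) : ℂ)‖) :=
    Summable.of_nonneg_of_le (fun l => norm_nonneg _)
      (fun l => by exact hgb l) hsum_uv
  have habs_err : ‖cbar f N J p θstar k j
        - fc f k * Complex.exp (-(twoPiI) * k * ((θstar j : ℝ):ℂ))‖
      ≤ ∑' l : ℤ, u l * v l := by
    rw [herr]
    calc ‖∑' l : ℤ, (if l = 0 then 0 else h (e l))‖
        ≤ ∑' l : ℤ, ‖(if l = 0 then 0 else h (e l) : ℂ)‖ := norm_tsum_le_tsum_norm hnormsum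
      _ ≤ ∑' l : ℤ, u l * v l :=
          Summable.tsum_le_tsum (fun l => by exact hgb l) hnormsum hsum_uv
  have hsqrtu : Real.sqrt (∑' l : ℤ, u l ^ 2) ≤ A := by
    calc Real.sqrt (∑' l : ℤ, u l ^ 2) ≤ Real.sqrt (A^2) := Real.sqrt_le_sqrt h2u_le
      _ = A := Real.sqrt_sq hA.le
  have hsqrtv : Real.sqrt (∑' l : ℤ, v l ^ 2) = ((N:ℝ)/2) ^ (-s) * Real.sqrt Z := by
    rw [h2v_eq, Real.sqrt_mul (sq_nonneg _), Real.sqrt_sq (Real.rpow_nonneg hN2.le _)]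
  have hhalf : ((N:ℝ)/2) ^ (-s) = 2 ^ s * (N:ℝ) ^ (-s) := by
    rw [Real.div_rpow (by linarith : (0:ℝ) ≤ (N:ℝ)) (by norm_num : (0:ℝ) ≤ (2:ℝ)),
      Real.rpow_neg (by norm_num : (0:ℝ) ≤ (2:ℝ))]
    field_simp
  have hNs : (N:ℝ) ^ (-s) ≤ (N:ℝ) ^ (-s + 1/2) :=
    Real.rpow_le_rpow_of_exponent_le (by linarith) (by linarith)
  have hNs_pos : (0:ℝ) < (N:ℝ) ^ (-s + 1/2) := Real.rpow_pos_of_pos (by linarith) _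
  have h2s_pos : (0:ℝ) < (2:ℝ) ^ s := Real.rpow_pos_of_pos (by norm_num) _
  calc ‖cbar f N J p θstar k j
        - fc f k * Complex.exp (-(twoPiI) * k * ((θstar j : ℝ):ℂ))‖
      ≤ ∑' l : ℤ, u l * v l := habs_err
    _ ≤ Real.sqrt (∑' l : ℤ, u l ^ 2) * Real.sqrt (∑' l : ℤ, v l ^ 2) := hcs
    _ ≤ A * (((N:ℝ)/2) ^ (-s) * Real.sqrt Z) := by
        rw [hsqrtv]
        exact mul_le_mul_of_nonneg_right hsqrtu (by positivity)
    _ = A * 2 ^ s * Real.sqrt Z * (N:ℝ) ^ (-s) := by rw [hhalf]; ring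
    _ ≤ A * 2 ^ s * (Real.sqrt Z + 1) * (N:ℝ) ^ (-s + 1/2) := by
        have hstep1 : A * 2 ^ s * Real.sqrt Z * (N:ℝ) ^ (-s)
            ≤ A * 2 ^ s * Real.sqrt Z * (N:ℝ) ^ (-s + 1/2) :=
          mul_le_mul_of_nonneg_left hNs (by positivity)
        have hstep2 : A * 2 ^ s * Real.sqrt Z * (N:ℝ) ^ (-s + 1/2)
            ≤ A * 2 ^ s * (Real.sqrt Z + 1) * (N:ℝ) ^ (-s + 1/2) := by
          apply mul_le_mul_of_nonneg_right _ hNs_pos.le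
          have hZZ : Real.sqrt Z ≤ Real.sqrt Z + 1 := by linarith
          exact mul_le_mul_of_nonneg_left hZZ (by positivity)
        linarith
end
end

section
/- Let f be a 1-periodic function in L²([0,1]) with Fourier coefficients c_k, let k₀ ≥ 1 and θ₁*,…,θ_J* ∈ ℝ. Then the Hessian of M at θ⁰ is the matrix ∇²M(θ⁰) = (8π²/J) ( Σ_{|k|≤k₀} k² |c_k|² ) ( I_J − (1/J) 𝟙_J ), where I_J is the J×J identity matrix and 𝟙_J the J×J all-ones matrix. Consequently, for every v ∈ ℝ^J with Σ_{j=1}^J v_j = 0, ‖∇²M(θ⁰) v‖ = (8π²/J) ( Σ_{|k|≤k₀} k² |c_k|² ) ‖v‖; in particular, if |c₁| ≥ c_* > 0 then ‖∇²M(θ⁰) v‖² ≥ (64π⁴ c_*⁴ / J²) ‖v‖² for every such v. -/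
open MeasureTheory ProbabilityTheory Real Finset
open scoped ENNReal NNReal

noncomputable section

/-- The Hessian matrix of a function `F : ℝ^J → ℝ`, with entries
`(∇²F(θ))_{i,j} = ∂²F/∂θ_i∂θ_j (θ)`. -/
def hess {J : ℕ} (F : (Fin J → ℝ) → ℝ) (θ : Fin J → ℝ) : Fin J → Fin J → ℝ :=
  fun i j => fderiv ℝ (fun x => fderiv ℝ F x (Pi.single j 1)) θ (Pi.single i 1)

/-- The operator norm of a `J × J` real matrix w.r.t. the Euclidean norm:
`‖B‖_op = sup_{‖v‖ ≤ 1} ‖Bv‖`. -/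
def opNorm {J : ℕ} (B : Fin J → Fin J → ℝ) : ℝ :=
  sSup ((fun v : Fin J → ℝ => Real.sqrt (∑ i, (∑ j, B i j * v j) ^ 2))
        '' {v : Fin J → ℝ | ∑ j, v j ^ 2 ≤ 1})



namespace PopHess

lemma eK_eq (k : ℤ) (x : ℝ) :
    eK k x = Complex.exp (((2 * Real.pi * k * x : ℝ) : ℂ) * Complex.I) := by
  unfold eK twoPiI
  congr 1
  push_cast
  ring

/-- weight -/
def w (f : ℝ → ℝ) (k : ℤ) : ℝ := ‖fc f k‖ ^ 2

/-- the double cosine sum -/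
def gk {J : ℕ} (θstar : Fin J → ℝ) (α : ℝ) (θ : Fin J → ℝ) : ℝ :=
  ∑ a : Fin J, ∑ b : Fin J, Real.cos (α * (θ a - θ b + (θstar b - θstar a)))

/-- the explicit form of the population criterion -/
def G (f : ℝ → ℝ) (k0 : ℕ) {J : ℕ} (θstar : Fin J → ℝ) (θ : Fin J → ℝ) : ℝ :=
  ∑ k ∈ Finset.Icc (-(k0:ℤ)) (k0:ℤ),
    (w f k - (J:ℝ)⁻¹ * (J:ℝ)⁻¹ * w f k * gk θstar (2 * Real.pi * k) θ)

lemma normSq_sum_exp {J : ℕ} (ψ : Fin J → ℝ) :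
    Complex.normSq (∑ j : Fin J, Complex.exp ((ψ j : ℂ) * Complex.I))
      = ∑ a : Fin J, ∑ b : Fin J, Real.cos (ψ a - ψ b) := by
  have key : ∀ a b : Fin J,
      (Complex.exp ((ψ a : ℂ) * Complex.I) *
        (starRingEnd ℂ) (Complex.exp ((ψ b : ℂ) * Complex.I))).re
        = Real.cos (ψ a - ψ b) := by
    intro a b
    rw [← Complex.exp_conj, ← Complex.exp_add]
    have h : (ψ a : ℂ) * Complex.I + (starRingEnd ℂ) ((ψ b : ℂ) * Complex.I)
        = ((ψ a - ψ b : ℝ) : ℂ) * Complex.I := by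
      simp [map_mul, Complex.conj_I, Complex.conj_ofReal]
      ring
    rw [h, Complex.exp_ofReal_mul_I_re]
  have h0 := Complex.mul_conj (∑ j : Fin J, Complex.exp ((ψ j : ℂ) * Complex.I))
  have h1 := congrArg Complex.re h0
  rw [Complex.ofReal_re] at h1
  rw [← h1, map_sum, Finset.sum_mul_sum, Complex.re_sum]
  refine Finset.sum_congr rfl fun a _ => ?_
  rw [Complex.re_sum]
  exact Finset.sum_congr rfl fun b _ => key a b

lemma sum_sq_abs_sub_mean {J : ℕ} (hJ : 1 ≤ J) (c : ℂ) (ψ : Fin J → ℝ) :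
    ∑ j : Fin J, ‖c * Complex.exp ((ψ j : ℂ) * Complex.I)
        - (J:ℂ)⁻¹ * ∑ j' : Fin J, c * Complex.exp ((ψ j' : ℂ) * Complex.I)‖ ^ 2
      = (J:ℝ) * ‖c‖ ^ 2
        - (J:ℝ)⁻¹ * ‖c‖ ^ 2 *
            Complex.normSq (∑ j : Fin J, Complex.exp ((ψ j : ℂ) * Complex.I)) := by
  have hJ0 : (J:ℝ) ≠ 0 := by positivity
  set u : Fin J → ℂ := fun j => Complex.exp ((ψ j : ℂ) * Complex.I) with hu
  set U : ℂ := ∑ j : Fin J, u j with hU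
  have habs : ∀ j, Complex.normSq (u j) = 1 := by
    intro j
    rw [← Complex.sq_norm, Complex.norm_exp]
    simp [hu]
  have hfac : ∀ j : Fin J, c * u j - (J:ℂ)⁻¹ * ∑ j' : Fin J, c * u j'
      = c * (u j - (J:ℂ)⁻¹ * U) := by
    intro j
    rw [← Finset.mul_sum]
    ring
  have step : ∀ j : Fin J,
      ‖c * u j - (J:ℂ)⁻¹ * ∑ j' : Fin J, c * u j'‖ ^ 2
        = Complex.normSq c * (1 + (J:ℝ)⁻¹^2 * Complex.normSq U
            - 2 * (J:ℝ)⁻¹ * (u j * (starRingEnd ℂ) U).re) := by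
    intro j
    rw [hfac, Complex.sq_norm, Complex.normSq_mul, Complex.normSq_sub, habs]
    congr 1
    have h1 : Complex.normSq ((J:ℂ)⁻¹ * U) = (J:ℝ)⁻¹^2 * Complex.normSq U := by
      rw [Complex.normSq_mul]
      congr 1
      rw [← Complex.sq_norm]
      simp [sq]
    have h2 : (u j * (starRingEnd ℂ) ((J:ℂ)⁻¹ * U)).re
        = (J:ℝ)⁻¹ * (u j * (starRingEnd ℂ) U).re := by
      rw [map_mul]
      have : (starRingEnd ℂ) ((J:ℂ)⁻¹) = ((J:ℝ)⁻¹ : ℂ) := by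
        simp
      rw [this]
      rw [show u j * (((J:ℝ)⁻¹ : ℂ) * (starRingEnd ℂ) U)
          = ((J:ℝ)⁻¹ : ℂ) * (u j * (starRingEnd ℂ) U) by ring]
      simp [Complex.re_ofReal_mul]
    rw [h1, h2]
    ring
  rw [Finset.sum_congr rfl fun j _ => step j]
  have hre : ∑ j : Fin J, (u j * (starRingEnd ℂ) U).re = Complex.normSq U := by
    rw [← Complex.re_sum, ← Finset.sum_mul, ← hU]
    have := congrArg Complex.re (Complex.mul_conj U)
    rw [Complex.ofReal_re] at this
    exact this
  rw [← Finset.mul_sum, Finset.sum_sub_distrib, Finset.sum_const, Finset.card_univ,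
    Fintype.card_fin, ← Finset.mul_sum, hre, ← Complex.sq_norm]
  field_simp
  have key : (J:ℝ)^2 * (J:ℝ)⁻¹^2 = 1 := by rw [← mul_pow, mul_inv_cancel₀ hJ0, one_pow]
  linear_combination (‖c‖^2 * Complex.normSq U + ‖c‖^2 * (J:ℝ)^2) * key

lemma Mpop_eq_G (f : ℝ → ℝ) (k0 J : ℕ) (hJ : 1 ≤ J) (θstar : Fin J → ℝ) :
    Mpop f k0 J θstar = G f k0 θstar := by
  funext θ
  have hJ0 : (J:ℝ) ≠ 0 := by positivity
  unfold Mpop G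
  rw [Finset.sum_comm, Finset.mul_sum]
  refine Finset.sum_congr rfl fun k _ => ?_
  have hψ : ∀ x : Fin J, fc f k * eK k (θ x - θstar x)
      = fc f k * Complex.exp (((2 * Real.pi * k * (θ x - θstar x) : ℝ) : ℂ) * Complex.I) := by
    intro x
    rw [eK_eq]
  simp only [hψ]
  rw [sum_sq_abs_sub_mean hJ (fc f k) (fun x => 2 * Real.pi * k * (θ x - θstar x)),
    normSq_sum_exp]
  rw [show (∑ a : Fin J, ∑ b : Fin J,
      Real.cos (2 * Real.pi * k * (θ a - θstar a) - 2 * Real.pi * k * (θ b - θstar b)))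
      = gk θstar (2 * Real.pi * k) θ by
    unfold gk
    refine Finset.sum_congr rfl fun a _ => Finset.sum_congr rfl fun b _ => ?_
    ring_nf]
  unfold w
  field_simp

def Lab {J : ℕ} (a b : Fin J) : (Fin J → ℝ) →L[ℝ] ℝ :=
  (ContinuousLinearMap.proj a : (Fin J → ℝ) →L[ℝ] ℝ) - ContinuousLinearMap.proj b

lemma Lab_apply {J : ℕ} (a b : Fin J) (v : Fin J → ℝ) : Lab a b v = v a - v b := by
  simp [Lab]

def ej {J : ℕ} (j a b : Fin J) : ℝ := (if a = j then (1:ℝ) else 0) - (if b = j then 1 else 0)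

lemma Lab_single {J : ℕ} (a b i : Fin J) : Lab a b (Pi.single i 1) = ej i a b := by
  rw [Lab_apply]; simp [Pi.single_apply, ej]

lemma hasFDerivAt_cos_affine {J : ℕ} (α s : ℝ) (a b : Fin J) (θ : Fin J → ℝ) :
    HasFDerivAt (fun x : Fin J → ℝ => Real.cos (α * (x a - x b + s)))
      ((-(α * Real.sin (α * (θ a - θ b + s)))) • Lab a b) θ := by
  have hfun : (fun x : Fin J → ℝ => Lab a b x + s) = fun x => x a - x b + s := by
    funext x; rw [Lab_apply]
  have hL : HasFDerivAt (fun x : Fin J → ℝ => x a - x b + s) (Lab a b) θ :=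
    hfun ▸ ((Lab (J := J) a b).hasFDerivAt (x := θ)).add_const s
  have h1 : HasFDerivAt (fun x : Fin J → ℝ => α * (x a - x b + s)) (α • Lab a b) θ :=
    hL.const_mul α
  have h2 := (Real.hasDerivAt_cos (α * (θ a - θ b + s))).comp_hasFDerivAt θ h1
  refine h2.congr_fderiv ?_
  rw [smul_smul]
  ring_nf

lemma hasFDerivAt_sin_affine {J : ℕ} (α s : ℝ) (a b : Fin J) (θ : Fin J → ℝ) :
    HasFDerivAt (fun x : Fin J → ℝ => Real.sin (α * (x a - x b + s)))
      ((α * Real.cos (α * (θ a - θ b + s))) • Lab a b) θ := by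
  have hfun : (fun x : Fin J → ℝ => Lab a b x + s) = fun x => x a - x b + s := by
    funext x; rw [Lab_apply]
  have hL : HasFDerivAt (fun x : Fin J → ℝ => x a - x b + s) (Lab a b) θ :=
    hfun ▸ ((Lab (J := J) a b).hasFDerivAt (x := θ)).add_const s
  have h1 : HasFDerivAt (fun x : Fin J → ℝ => α * (x a - x b + s)) (α • Lab a b) θ :=
    hL.const_mul α
  have h2 := (Real.hasDerivAt_sin (α * (θ a - θ b + s))).comp_hasFDerivAt θ h1
  refine h2.congr_fderiv ?_
  rw [smul_smul]
  ring_nf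

/-- derivative of `G` -/
def G' (f : ℝ → ℝ) (k0 : ℕ) {J : ℕ} (θstar : Fin J → ℝ) (θ : Fin J → ℝ) :
    (Fin J → ℝ) →L[ℝ] ℝ :=
  ∑ k ∈ Finset.Icc (-(k0:ℤ)) (k0:ℤ), (-((J:ℝ)⁻¹ * (J:ℝ)⁻¹ * w f k)) •
    ∑ a : Fin J, ∑ b : Fin J,
      (-(2 * Real.pi * k *
          Real.sin (2 * Real.pi * k * (θ a - θ b + (θstar b - θstar a))))) • Lab a b

lemma hasFDerivAt_G (f : ℝ → ℝ) (k0 : ℕ) {J : ℕ} (θstar : Fin J → ℝ) (θ : Fin J → ℝ) :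
    HasFDerivAt (G f k0 θstar) (G' f k0 θstar θ) θ := by
  unfold G G'
  refine HasFDerivAt.fun_sum fun k _ => ?_
  have hgk : HasFDerivAt (gk θstar (2 * Real.pi * k))
      (∑ a : Fin J, ∑ b : Fin J,
        (-(2 * Real.pi * k *
            Real.sin (2 * Real.pi * k * (θ a - θ b + (θstar b - θstar a))))) • Lab a b) θ := by
    unfold gk
    exact HasFDerivAt.fun_sum fun a _ => HasFDerivAt.fun_sum fun b _ =>
      hasFDerivAt_cos_affine _ _ _ _ _
  have h := (hgk.const_mul ((J:ℝ)⁻¹ * (J:ℝ)⁻¹ * w f k)).const_sub (w f k)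
  rw [← neg_smul] at h
  exact h

def D1 (f : ℝ → ℝ) (k0 : ℕ) {J : ℕ} (θstar : Fin J → ℝ) (j : Fin J) (θ : Fin J → ℝ) : ℝ :=
  ∑ k ∈ Finset.Icc (-(k0:ℤ)) (k0:ℤ), (-((J:ℝ)⁻¹ * (J:ℝ)⁻¹ * w f k)) *
    ∑ a : Fin J, ∑ b : Fin J,
      (-(2 * Real.pi * k *
          Real.sin (2 * Real.pi * k * (θ a - θ b + (θstar b - θstar a))))) * ej j a b

lemma fderiv_G_eq_D1 (f : ℝ → ℝ) (k0 : ℕ) {J : ℕ} (θstar : Fin J → ℝ) (j : Fin J) :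
    (fun θ => fderiv ℝ (G f k0 θstar) θ (Pi.single j 1)) = D1 f k0 θstar j := by
  funext θ
  rw [(hasFDerivAt_G f k0 θstar θ).fderiv]
  unfold G' D1
  simp only [ContinuousLinearMap.coe_sum', Finset.sum_apply, ContinuousLinearMap.coe_smul',
    Pi.smul_apply, smul_eq_mul, Lab_single]

def D1' (f : ℝ → ℝ) (k0 : ℕ) {J : ℕ} (θstar : Fin J → ℝ) (j : Fin J) (θ : Fin J → ℝ) :
    (Fin J → ℝ) →L[ℝ] ℝ :=
  ∑ k ∈ Finset.Icc (-(k0:ℤ)) (k0:ℤ), (-((J:ℝ)⁻¹ * (J:ℝ)⁻¹ * w f k)) •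
    ∑ a : Fin J, ∑ b : Fin J,
      (-(2 * Real.pi * k * ej j a b)) •
        ((2 * Real.pi * k *
            Real.cos (2 * Real.pi * k * (θ a - θ b + (θstar b - θstar a)))) • Lab a b)

lemma hasFDerivAt_D1 (f : ℝ → ℝ) (k0 : ℕ) {J : ℕ} (θstar : Fin J → ℝ) (j : Fin J)
    (θ : Fin J → ℝ) :
    HasFDerivAt (D1 f k0 θstar j) (D1' f k0 θstar j θ) θ := by
  unfold D1 D1'
  refine HasFDerivAt.fun_sum fun k _ => ?_
  refine HasFDerivAt.const_mul ?_ _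
  refine HasFDerivAt.fun_sum fun a _ => ?_
  refine HasFDerivAt.fun_sum fun b _ => ?_
  have hfun : (fun θ : Fin J → ℝ =>
      (-(2 * Real.pi * k *
          Real.sin (2 * Real.pi * k * (θ a - θ b + (θstar b - θstar a))))) * ej j a b)
      = fun θ => (-(2 * Real.pi * k * ej j a b)) *
          Real.sin (2 * Real.pi * k * (θ a - θ b + (θstar b - θstar a))) := by
    funext θ; ring
  rw [hfun]
  exact (hasFDerivAt_sin_affine _ _ _ _ _).const_mul _

lemma arg0 {J : ℕ} (θstar : Fin J → ℝ) (a b : Fin J) :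
    theta0 J θstar a - theta0 J θstar b + (θstar b - θstar a) = 0 := by
  unfold theta0; ring

lemma sum_ej {J : ℕ} (i j : Fin J) :
    ∑ a : Fin J, ∑ b : Fin J, ej j a b * ej i a b
      = 2 * ((J:ℝ) * (if i = j then 1 else 0) - 1) := by
  unfold ej
  simp only [sub_mul, mul_sub, Finset.sum_sub_distrib, mul_ite, ite_mul, mul_one, mul_zero,
    one_mul, zero_mul, Finset.sum_ite_eq, Finset.sum_ite_eq', Finset.mem_univ, if_true,
    Finset.sum_const, Finset.card_univ, Fintype.card_fin, nsmul_eq_mul]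
  by_cases h : i = j <;> simp [h, eq_comm] <;> ring

lemma hess_G (f : ℝ → ℝ) (k0 : ℕ) {J : ℕ} (hJ : 1 ≤ J) (θstar : Fin J → ℝ) (i j : Fin J) :
    hess (G f k0 θstar) (theta0 J θstar) i j
      = (8 * Real.pi^2 / J) *
          (∑ k ∈ Finset.Icc (-(k0:ℤ)) (k0:ℤ), (k:ℝ)^2 * ‖fc f k‖^2)
          * ((if i = j then (1:ℝ) else 0) - (J:ℝ)⁻¹) := by
  have hJ0 : (J:ℝ) ≠ 0 := by positivity
  unfold hess
  rw [fderiv_G_eq_D1 f k0 θstar j, (hasFDerivAt_D1 f k0 θstar j (theta0 J θstar)).fderiv]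
  simp only [D1', ContinuousLinearMap.coe_sum', Finset.sum_apply,
    ContinuousLinearMap.coe_smul', Pi.smul_apply, smul_eq_mul, Lab_single, arg0, mul_zero,
    Real.cos_zero, mul_one]
  have per_k : ∀ k ∈ Finset.Icc (-(k0:ℤ)) (k0:ℤ),
      (-((J:ℝ)⁻¹ * (J:ℝ)⁻¹ * w f k)) *
        (∑ a : Fin J, ∑ b : Fin J,
          (-(2 * Real.pi * k * ej j a b)) * (2 * Real.pi * k * ej i a b))
        = (8 * Real.pi^2 / J * ((if i = j then (1:ℝ) else 0) - (J:ℝ)⁻¹))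
            * ((k:ℝ)^2 * w f k) := by
    intro k _
    have hinner : ∑ a : Fin J, ∑ b : Fin J,
        (-(2 * Real.pi * k * ej j a b)) * (2 * Real.pi * k * ej i a b)
        = -(2 * Real.pi * k)^2 * ∑ a : Fin J, ∑ b : Fin J, ej j a b * ej i a b := by
      rw [Finset.mul_sum]
      refine Finset.sum_congr rfl fun a _ => ?_
      rw [Finset.mul_sum]
      refine Finset.sum_congr rfl fun b _ => ?_
      ring
    rw [hinner, sum_ej]
    field_simp
    ring
  rw [Finset.sum_congr rfl per_k, ← Finset.mul_sum]
  simp only [w]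
  ring

end PopHess



/-- **Lemma (explicit Hessian of the population criterion at `θ⁰`).**
`∇²M(θ⁰) = (8π²/J) (∑_{|k|≤k₀} k²|c_k|²) (I_J - (1/J)𝟙_J)`; consequently for every `v`
with `∑_j v_j = 0`, `‖∇²M(θ⁰)v‖ = (8π²/J)(∑_{|k|≤k₀} k²|c_k|²)‖v‖`, and if `|c₁| ≥ c_* > 0`
then `‖∇²M(θ⁰)v‖² ≥ (64π⁴c_*⁴/J²)‖v‖²`. -/
theorem population_criterion_hessian
    (f : ℝ → ℝ) (hper : Function.Periodic f 1) (hmeas : Measurable f)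
    (hL2 : MemLp f 2 (volume.restrict (Set.Ioc (0:ℝ) 1)))
    (k0 J : ℕ) (hk0 : 1 ≤ k0) (hJ : 1 ≤ J) (θstar : Fin J → ℝ) :
    (∀ i j : Fin J,
      hess (Mpop f k0 J θstar) (theta0 J θstar) i j
        = (8 * Real.pi^2 / J) * (∑ k ∈ Finset.Icc (-(k0:ℤ)) (k0:ℤ), (k:ℝ)^2 * ‖fc f k‖^2)
            * ((if i = j then (1:ℝ) else 0) - (J:ℝ)⁻¹)) ∧
    (∀ v : Fin J → ℝ, ∑ j, v j = 0 →
      Real.sqrt (∑ i, (∑ j, hess (Mpop f k0 J θstar) (theta0 J θstar) i j * v j) ^ 2)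
        = (8 * Real.pi^2 / J) * (∑ k ∈ Finset.Icc (-(k0:ℤ)) (k0:ℤ), (k:ℝ)^2 * ‖fc f k‖^2)
            * Real.sqrt (∑ j, v j ^ 2)) ∧
    (∀ cstar : ℝ, 0 < cstar → cstar ≤ ‖fc f 1‖ →
      ∀ v : Fin J → ℝ, ∑ j, v j = 0 →
        (64 * Real.pi^4 * cstar^4 / (J:ℝ)^2) * (∑ j, v j ^ 2)
          ≤ ∑ i, (∑ j, hess (Mpop f k0 J θstar) (theta0 J θstar) i j * v j) ^ 2) := by
  have hJ0 : (J:ℝ) ≠ 0 := by positivity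
  set S := ∑ k ∈ Finset.Icc (-(k0:ℤ)) (k0:ℤ), (k:ℝ)^2 * ‖fc f k‖^2 with hS
  have hSnn : 0 ≤ S :=
    Finset.sum_nonneg fun k _ => by positivity
  have h1 : ∀ i j : Fin J, hess (Mpop f k0 J θstar) (theta0 J θstar) i j
      = 8 * Real.pi^2 / J * S * ((if i = j then (1:ℝ) else 0) - (J:ℝ)⁻¹) := by
    intro i j
    rw [PopHess.Mpop_eq_G f k0 J hJ θstar]
    exact PopHess.hess_G f k0 hJ θstar i j
  have hcnn : 0 ≤ 8 * Real.pi^2 / J * S := by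
    apply mul_nonneg _ hSnn
    positivity
  have hentry : ∀ v : Fin J → ℝ, ∑ j, v j = 0 → ∀ i,
      (∑ j, hess (Mpop f k0 J θstar) (theta0 J θstar) i j * v j)
        = 8 * Real.pi^2 / J * S * v i := by
    intro v hv i
    rw [Finset.sum_congr rfl fun j (_ : j ∈ Finset.univ) => by rw [h1 i j]]
    have step : ∀ j : Fin J,
        8 * Real.pi^2 / J * S * ((if i = j then (1:ℝ) else 0) - (J:ℝ)⁻¹) * v j
          = (if i = j then (8 * Real.pi^2 / J * S) * v j else 0)
              - (8 * Real.pi^2 / J * S * (J:ℝ)⁻¹) * v j := by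
      intro j
      by_cases h : i = j <;> simp [h] <;> ring
    rw [Finset.sum_congr rfl fun j (_ : j ∈ Finset.univ) => step j,
      Finset.sum_sub_distrib, ← Finset.mul_sum, hv, mul_zero, sub_zero,
      Finset.sum_ite_eq]
    simp
  have hsum : ∀ v : Fin J → ℝ, ∑ j, v j = 0 →
      ∑ i, (∑ j, hess (Mpop f k0 J θstar) (theta0 J θstar) i j * v j) ^ 2
        = (8 * Real.pi^2 / J * S)^2 * ∑ j, v j ^ 2 := by
    intro v hv
    rw [Finset.sum_congr rfl fun i (_ : i ∈ Finset.univ) => by rw [hentry v hv i]]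
    rw [Finset.sum_congr rfl fun i (_ : i ∈ Finset.univ) =>
      (show (8 * Real.pi^2 / J * S * v i)^2 = (8 * Real.pi^2 / J * S)^2 * v i ^ 2 by ring)]
    rw [← Finset.mul_sum]
  refine ⟨h1, ?_, ?_⟩
  · intro v hv
    rw [hsum v hv, Real.sqrt_mul (sq_nonneg _), Real.sqrt_sq hcnn]
  · intro cstar hcpos hcle v hv
    have hvs : 0 ≤ ∑ j, v j ^ 2 := Finset.sum_nonneg fun j _ => sq_nonneg _
    have hS1 : cstar^2 ≤ S := by
      have h1mem : (1:ℤ) ∈ Finset.Icc (-(k0:ℤ)) (k0:ℤ) := by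
        have hk : (1:ℤ) ≤ (k0:ℤ) := by exact_mod_cast hk0
        rw [Finset.mem_Icc]
        constructor <;> linarith
      have hle := Finset.single_le_sum
        (f := fun k : ℤ => (k:ℝ)^2 * ‖fc f k‖^2)
        (fun k _ => by positivity) h1mem
      simp only [Int.cast_one, one_pow, one_mul] at hle
      have : cstar^2 ≤ ‖fc f 1‖^2 :=
        pow_le_pow_left₀ hcpos.le hcle 2
      linarith
    have h4 : cstar^4 ≤ S^2 := by nlinarith
    have hcc : 64 * Real.pi^4 * cstar^4 / (J:ℝ)^2 ≤ (8 * Real.pi^2 / J * S)^2 := by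
      have heq : (8 * Real.pi^2 / J * S)^2 = 64 * Real.pi^4 * S^2 / (J:ℝ)^2 := by
        field_simp; ring
      rw [heq]
      gcongr
    rw [hsum v hv]
    exact mul_le_mul_of_nonneg_right hcc hvs
end
end

section
/- Let f ∈ W̃_s(A,c_*) with s ≥ 2, let k₀ ≥ 1 and θ₁*,…,θ_J* ∈ ℝ. Then for every θ ∈ ℝ^J with Σ_{j=1}^J θ_j = 0, ‖∇²M(θ) − ∇²M(θ⁰)‖_op ≤ (64π⁴A²/J) ‖θ − θ⁰‖². -/
open MeasureTheory ProbabilityTheory Real Finset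
open scoped ENNReal NNReal

noncomputable section

/-! ### Auxiliary machinery -/

namespace HessAux

variable {J : ℕ}

/-- The continuous linear functional `v ↦ v a - v b`. -/
def Lm (a b : Fin J) : ((Fin J → ℝ)) →L[ℝ] ℝ :=
  (ContinuousLinearMap.proj (R := ℝ) (φ := fun _ : Fin J => ℝ) a)
  - (ContinuousLinearMap.proj (R := ℝ) (φ := fun _ : Fin J => ℝ) b)

/-- Indicator `E a j = δ_{aj}`. -/
def Efun (a j : Fin J) : ℝ := if a = j then 1 else 0

lemma Efun_nonneg (a j : Fin J) : 0 ≤ Efun a j := by unfold Efun; split <;> norm_num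

lemma Efun_abs_sub (a b j : Fin J) : |Efun a j - Efun b j| ≤ Efun a j + Efun b j := by
  unfold Efun; split <;> split <;> norm_num

lemma sum_Efun (a : Fin J) : ∑ j, Efun a j = 1 := by
  simp [Efun, Finset.sum_ite_eq]

lemma sum_mul_Efun (i : Fin J) (X : Fin J → ℝ) : ∑ a, X a * Efun a i = X i := by
  simp [Efun, mul_ite, Finset.sum_ite_eq']

lemma Lm_apply (a b : Fin J) (v : Fin J → ℝ) : Lm a b v = v a - v b := rfl

lemma Lm_single (a b j : Fin J) : Lm a b (Pi.single j 1) = Efun a j - Efun b j := by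
  rw [Lm_apply]; simp [Efun, Pi.single_apply]

lemma hasFDerivAt_sub_proj (a b : Fin J) (θ : Fin J → ℝ) :
    HasFDerivAt (fun θ : Fin J → ℝ => θ a - θ b) (Lm a b) θ := by
  have := ((ContinuousLinearMap.proj (R := ℝ) (φ := fun _ : Fin J => ℝ) a).hasFDerivAt
      (x := θ)).sub ((ContinuousLinearMap.proj (R := ℝ) (φ := fun _ : Fin J => ℝ) b).hasFDerivAt (x := θ))
  exact this

lemma hasFDerivAt_cosTerm (ω c : ℝ) (a b : Fin J) (θ : Fin J → ℝ) :
    HasFDerivAt (fun θ : Fin J → ℝ => Real.cos (ω * (θ a - θ b) + c))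
      ((-Real.sin (ω * (θ a - θ b) + c) * ω) • Lm a b) θ := by
  have h1 : HasFDerivAt (fun θ : Fin J → ℝ => ω * (θ a - θ b) + c) (ω • Lm a b) θ :=
    ((hasFDerivAt_sub_proj a b θ).const_mul ω).add_const c
  have := h1.cos
  rw [← smul_smul]; exact this

lemma hasFDerivAt_sinTerm (ω c : ℝ) (a b : Fin J) (θ : Fin J → ℝ) :
    HasFDerivAt (fun θ : Fin J → ℝ => Real.sin (ω * (θ a - θ b) + c))
      ((Real.cos (ω * (θ a - θ b) + c) * ω) • Lm a b) θ := by
  have h1 : HasFDerivAt (fun θ : Fin J → ℝ => ω * (θ a - θ b) + c) (ω • Lm a b) θ :=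
    ((hasFDerivAt_sub_proj a b θ).const_mul ω).add_const c
  have := h1.sin
  rw [← smul_smul]; exact this

variable {ι : Type*} (K : Finset ι) (w Ω : ι → ℝ) (c : ι → Fin J → Fin J → ℝ)

lemma fderiv_CG (C : ℝ) (x : Fin J → ℝ) (j : Fin J) :
    fderiv ℝ (fun θ => C - ∑ k ∈ K, ∑ a : Fin J, ∑ b : Fin J,
        w k * Real.cos (Ω k * (θ a - θ b) + c k a b)) x (Pi.single j 1)
    = ∑ k ∈ K, ∑ a : Fin J, ∑ b : Fin J,
        (w k * Ω k * (Efun a j - Efun b j)) * Real.sin (Ω k * (x a - x b) + c k a b) := by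
  have hG : HasFDerivAt (fun θ : Fin J → ℝ => C - ∑ k ∈ K, ∑ a : Fin J, ∑ b : Fin J,
      w k * Real.cos (Ω k * (θ a - θ b) + c k a b))
      (-(∑ k ∈ K, ∑ a : Fin J, ∑ b : Fin J,
        (w k * (-Real.sin (Ω k * (x a - x b) + c k a b) * Ω k)) • Lm a b)) x := by
    apply HasFDerivAt.const_sub
    apply HasFDerivAt.fun_sum
    intro k _
    apply HasFDerivAt.fun_sum
    intro a _
    apply HasFDerivAt.fun_sum
    intro b _
    have := (hasFDerivAt_cosTerm (Ω k) (c k a b) a b x).const_mul (w k)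
    rwa [smul_smul] at this
  rw [hG.fderiv]
  simp only [ContinuousLinearMap.neg_apply, ContinuousLinearMap.sum_apply,
    ContinuousLinearMap.smul_apply, Lm_single, ← Finset.sum_neg_distrib]
  refine Finset.sum_congr rfl fun k _ => Finset.sum_congr rfl fun a _ =>
    Finset.sum_congr rfl fun b _ => ?_
  simp only [smul_eq_mul]
  ring

lemma hess_CG (C : ℝ) (θ : Fin J → ℝ) (i j : Fin J) :
    hess (fun θ => C - ∑ k ∈ K, ∑ a : Fin J, ∑ b : Fin J,
        w k * Real.cos (Ω k * (θ a - θ b) + c k a b)) θ i j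
    = ∑ k ∈ K, ∑ a : Fin J, ∑ b : Fin J,
        w k * Ω k ^ 2 * Real.cos (Ω k * (θ a - θ b) + c k a b)
          * ((Efun a i - Efun b i) * (Efun a j - Efun b j)) := by
  unfold hess
  have hfun : (fun x => fderiv ℝ (fun θ => C - ∑ k ∈ K, ∑ a : Fin J, ∑ b : Fin J,
      w k * Real.cos (Ω k * (θ a - θ b) + c k a b)) x (Pi.single j 1))
      = fun x => ∑ k ∈ K, ∑ a : Fin J, ∑ b : Fin J,
        (w k * Ω k * (Efun a j - Efun b j)) * Real.sin (Ω k * (x a - x b) + c k a b) := by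
    funext x; exact fderiv_CG K w Ω c C x j
  rw [hfun]
  have hD : HasFDerivAt (fun x : Fin J → ℝ => ∑ k ∈ K, ∑ a : Fin J, ∑ b : Fin J,
      (w k * Ω k * (Efun a j - Efun b j)) * Real.sin (Ω k * (x a - x b) + c k a b))
      (∑ k ∈ K, ∑ a : Fin J, ∑ b : Fin J,
        (w k * Ω k * (Efun a j - Efun b j)) • ((Real.cos (Ω k * (θ a - θ b) + c k a b) * Ω k) • Lm a b)) θ := by
    apply HasFDerivAt.fun_sum; intro k _
    apply HasFDerivAt.fun_sum; intro a _
    apply HasFDerivAt.fun_sum; intro b _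
    exact (hasFDerivAt_sinTerm (Ω k) (c k a b) a b θ).const_mul _
  rw [hD.fderiv]
  simp only [ContinuousLinearMap.sum_apply, ContinuousLinearMap.smul_apply, Lm_single]
  refine Finset.sum_congr rfl fun k _ => Finset.sum_congr rfl fun a _ =>
    Finset.sum_congr rfl fun b _ => ?_
  simp only [smul_eq_mul]
  ring

/-! ### Closed form of the population criterion -/

lemma eK_eq (k : ℤ) (x : ℝ) : eK k x = Complex.exp (((2*π*k*x : ℝ) : ℂ) * Complex.I) := by
  unfold eK twoPiI; congr 1; push_cast; ring

lemma abs_eK (k : ℤ) (x : ℝ) : ‖eK k x‖ = 1 := by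
  rw [eK_eq]; exact Complex.norm_exp_ofReal_mul_I _

lemma normSq_eK (k : ℤ) (x : ℝ) : Complex.normSq (eK k x) = 1 := by
  rw [← Complex.sq_norm, abs_eK]; norm_num

lemma re_eK (k : ℤ) (x : ℝ) : (eK k x).re = Real.cos (2*π*k*x) := by
  rw [eK_eq]; exact Complex.exp_ofReal_mul_I_re _

lemma eK_mul_conj (k : ℤ) (x y : ℝ) :
    eK k x * (starRingEnd ℂ) (eK k y) = eK k (x - y) := by
  rw [eK_eq, eK_eq, eK_eq, ← Complex.exp_conj, ← Complex.exp_add]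
  congr 1
  rw [map_mul, Complex.conj_ofReal, Complex.conj_I]
  push_cast; ring

lemma sum_abs_sub_mean_sq (hJ : 0 < J) (z : Fin J → ℂ) :
    ∑ j, ‖z j - (J:ℂ)⁻¹ * ∑ j', z j'‖ ^ 2
      = (∑ j, Complex.normSq (z j)) - (J:ℝ)⁻¹ * Complex.normSq (∑ j, z j) := by
  have hJC : (J:ℂ) ≠ 0 := Nat.cast_ne_zero.mpr hJ.ne'
  have hJR : (J:ℝ) ≠ 0 := Nat.cast_ne_zero.mpr hJ.ne'
  set m : ℂ := (J:ℂ)⁻¹ * ∑ j', z j' with hm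
  have hsum : ∑ j', z j' = (J:ℂ) * m := by
    rw [hm]; field_simp
  calc ∑ j, ‖z j - m‖ ^ 2
      = ∑ j, (Complex.normSq (z j) + Complex.normSq m - 2 * (z j * (starRingEnd ℂ) m).re) := by
        refine Finset.sum_congr rfl fun j _ => ?_
        rw [Complex.sq_norm, Complex.normSq_sub]
    _ = (∑ j, Complex.normSq (z j)) + J * Complex.normSq m
          - 2 * ((∑ j, z j) * (starRingEnd ℂ) m).re := by
        rw [Finset.sum_sub_distrib, Finset.sum_add_distrib, Finset.sum_const, Finset.card_univ,
          Fintype.card_fin, nsmul_eq_mul, ← Finset.mul_sum, ← Complex.re_sum, ← Finset.sum_mul]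
    _ = (∑ j, Complex.normSq (z j)) - J * Complex.normSq m := by
        rw [hsum]
        have : ((J:ℂ) * m * (starRingEnd ℂ) m).re = (J:ℝ) * Complex.normSq m := by
          rw [mul_assoc, Complex.mul_conj]
          simp
        rw [this]; ring
    _ = (∑ j, Complex.normSq (z j)) - (J:ℝ)⁻¹ * Complex.normSq (∑ j, z j) := by
        have hm2 : Complex.normSq m = (J:ℝ)⁻¹ ^ 2 * Complex.normSq (∑ j, z j) := by
          rw [hm, Complex.normSq_mul, Complex.normSq_inv, Complex.normSq_natCast]
          ring
        rw [hm2]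
        field_simp

lemma normSq_sum_eK (k : ℤ) (x : Fin J → ℝ) :
    Complex.normSq (∑ j, eK k (x j)) = ∑ a : Fin J, ∑ b : Fin J, Real.cos (2*π*(k:ℝ)*(x a - x b)) := by
  have h : Complex.normSq (∑ j, eK k (x j))
      = ((∑ a : Fin J, eK k (x a)) * (starRingEnd ℂ) (∑ b : Fin J, eK k (x b))).re := by
    rw [Complex.mul_conj]; simp
  rw [h, map_sum, Finset.sum_mul_sum, Complex.re_sum]
  refine Finset.sum_congr rfl fun a _ => ?_
  rw [Complex.re_sum]
  refine Finset.sum_congr rfl fun b _ => ?_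
  rw [eK_mul_conj, re_eK]

lemma Mpop_eq (f : ℝ → ℝ) (k0 : ℕ) (hJ : 0 < J) (θstar θ : Fin J → ℝ) :
    Mpop f k0 J θstar θ
      = (∑ k ∈ Finset.Icc (-(k0:ℤ)) (k0:ℤ), ‖fc f k‖ ^ 2)
        - ∑ k ∈ Finset.Icc (-(k0:ℤ)) (k0:ℤ), ∑ a : Fin J, ∑ b : Fin J,
            (‖fc f k‖ ^ 2 / (J:ℝ)^2)
              * Real.cos ((2*π*(k:ℝ)) * (θ a - θ b) + (-(2*π*(k:ℝ))) * (θstar a - θstar b)) := by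
  have hJR : (J:ℝ) ≠ 0 := Nat.cast_ne_zero.mpr hJ.ne'
  unfold Mpop
  rw [Finset.sum_comm, Finset.mul_sum, ← Finset.sum_sub_distrib]
  refine Finset.sum_congr rfl fun k hk => ?_
  have key := sum_abs_sub_mean_sq hJ (fun j => fc f k * eK k (θ j - θstar j))
  rw [key]
  have h1 : ∑ j : Fin J, Complex.normSq (fc f k * eK k (θ j - θstar j))
      = (J:ℝ) * ‖fc f k‖ ^ 2 := by
    simp [Complex.normSq_mul, normSq_eK, Complex.sq_norm, Finset.sum_const, mul_comm]
  have h2 : Complex.normSq (∑ j : Fin J, fc f k * eK k (θ j - θstar j))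
      = ‖fc f k‖ ^ 2
        * ∑ a : Fin J, ∑ b : Fin J, Real.cos (2*π*(k:ℝ)*((θ a - θstar a) - (θ b - θstar b))) := by
    rw [← Finset.mul_sum, Complex.normSq_mul, Complex.sq_norm,
      normSq_sum_eK k (fun j => θ j - θstar j)]
  rw [h1, h2]
  have h3 : ∀ a b : Fin J,
      Real.cos ((2*π*(k:ℝ)) * (θ a - θ b) + (-(2*π*(k:ℝ))) * (θstar a - θstar b))
        = Real.cos (2*π*(k:ℝ)*((θ a - θstar a) - (θ b - θstar b))) := by
    intro a b; congr 1; ring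
  simp only [h3]
  simp only [← Finset.mul_sum]
  field_simp

/-! ### Hessian of the population criterion -/

lemma hess_Mpop (f : ℝ → ℝ) (k0 : ℕ) (hJ : 0 < J) (θstar : Fin J → ℝ)
    (η : Fin J → ℝ) (i j : Fin J) :
    hess (Mpop f k0 J θstar) η i j
      = ∑ k ∈ Finset.Icc (-(k0:ℤ)) (k0:ℤ), ∑ a : Fin J, ∑ b : Fin J,
          (‖fc f k‖ ^ 2 / (J:ℝ)^2) * (2*π*(k:ℝ))^2
            * Real.cos ((2*π*(k:ℝ)) * (η a - η b) + (-(2*π*(k:ℝ))) * (θstar a - θstar b))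
            * ((Efun a i - Efun b i) * (Efun a j - Efun b j)) := by
  have hMe : Mpop f k0 J θstar = fun η =>
      (∑ k ∈ Finset.Icc (-(k0:ℤ)) (k0:ℤ), ‖fc f k‖ ^ 2)
        - ∑ k ∈ Finset.Icc (-(k0:ℤ)) (k0:ℤ), ∑ a : Fin J, ∑ b : Fin J,
            (‖fc f k‖ ^ 2 / (J:ℝ)^2)
              * Real.cos ((2*π*(k:ℝ)) * (η a - η b) + (-(2*π*(k:ℝ))) * (θstar a - θstar b)) :=
    funext (Mpop_eq f k0 hJ θstar)
  rw [hMe]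
  exact hess_CG (Finset.Icc (-(k0:ℤ)) (k0:ℤ))
    (fun k => ‖fc f k‖ ^ 2 / (J:ℝ)^2)
    (fun k => 2*π*(k:ℝ))
    (fun k a b => (-(2*π*(k:ℝ))) * (θstar a - θstar b)) _ η i j

/-- The coefficient of the Hessian difference. -/
def c2 (f : ℝ → ℝ) (k0 J : ℕ) (θstar θ : Fin J → ℝ) (a b : Fin J) : ℝ :=
  ∑ k ∈ Finset.Icc (-(k0:ℤ)) (k0:ℤ),
    (‖fc f k‖ ^ 2 / (J:ℝ)^2) * (2*π*(k:ℝ))^2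
      * (Real.cos ((2*π*(k:ℝ)) * (θ a - θ b) + (-(2*π*(k:ℝ))) * (θstar a - θstar b)) - 1)

lemma hessdiff_eq (f : ℝ → ℝ) (k0 : ℕ) (hJ : 0 < J) (θstar θ : Fin J → ℝ) (i j : Fin J) :
    hess (Mpop f k0 J θstar) θ i j - hess (Mpop f k0 J θstar) (theta0 J θstar) i j
      = ∑ a : Fin J, ∑ b : Fin J,
          c2 f k0 J θstar θ a b * ((Efun a i - Efun b i) * (Efun a j - Efun b j)) := by
  rw [hess_Mpop f k0 hJ θstar θ i j, hess_Mpop f k0 hJ θstar (theta0 J θstar) i j]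
  simp only [← Finset.sum_sub_distrib]
  rw [Finset.sum_comm]
  unfold c2
  refine Finset.sum_congr rfl fun a _ => ?_
  rw [Finset.sum_comm]
  refine Finset.sum_congr rfl fun b _ => ?_
  rw [Finset.sum_mul]
  refine Finset.sum_congr rfl fun k _ => ?_
  have hzero : (2*π*(k:ℝ)) * (theta0 J θstar a - theta0 J θstar b)
      + (-(2*π*(k:ℝ))) * (θstar a - θstar b) = 0 := by
    simp only [theta0]; ring
  rw [hzero, Real.cos_zero]
  ring

lemma hessdiff_symm (f : ℝ → ℝ) (k0 : ℕ) (hJ : 0 < J) (θstar θ : Fin J → ℝ) (i j : Fin J) :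
    hess (Mpop f k0 J θstar) θ i j - hess (Mpop f k0 J θstar) (theta0 J θstar) i j
      = hess (Mpop f k0 J θstar) θ j i - hess (Mpop f k0 J θstar) (theta0 J θstar) j i := by
  rw [hessdiff_eq f k0 hJ θstar θ i j, hessdiff_eq f k0 hJ θstar θ j i]
  exact Finset.sum_congr rfl fun a _ => Finset.sum_congr rfl fun b _ => by ring

lemma sum_k4_le (A s : ℝ) (hs : 2 ≤ s) (f : ℝ → ℝ)
    (hsum : Summable (fun k : ℤ => (1 + |(k:ℝ)| ^ (2*s)) * ‖fc f k‖ ^ 2))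
    (htsum : (∑' k : ℤ, (1 + |(k:ℝ)| ^ (2*s)) * ‖fc f k‖ ^ 2) ≤ A ^ 2)
    (k0 : ℕ) :
    ∑ k ∈ Finset.Icc (-(k0:ℤ)) (k0:ℤ), (k:ℝ)^4 * ‖fc f k‖ ^ 2 ≤ A ^ 2 := by
  have hterm : ∀ k : ℤ, (k:ℝ)^4 * ‖fc f k‖ ^ 2
      ≤ (1 + |(k:ℝ)| ^ (2*s)) * ‖fc f k‖ ^ 2 := by
    intro k
    apply mul_le_mul_of_nonneg_right _ (sq_nonneg _)
    rcases eq_or_ne k 0 with rfl | hk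
    · norm_num
      rw [Real.zero_rpow (by nlinarith : (2*s) ≠ 0)]
      norm_num
    · have h1 : (1:ℝ) ≤ |(k:ℝ)| := by
        rw [← Int.cast_abs]
        exact_mod_cast Int.one_le_abs hk
      calc (k:ℝ)^4 = |(k:ℝ)|^(4:ℕ) := by
            rw [← abs_pow, abs_of_nonneg (by positivity : (0:ℝ) ≤ (k:ℝ)^4)]
        _ = |(k:ℝ)| ^ ((4:ℕ):ℝ) := (Real.rpow_natCast _ 4).symm
        _ ≤ |(k:ℝ)| ^ (2*s) := Real.rpow_le_rpow_of_exponent_le h1 (by push_cast; linarith)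
        _ ≤ 1 + |(k:ℝ)| ^ (2*s) := le_add_of_nonneg_left zero_le_one
  calc ∑ k ∈ Finset.Icc (-(k0:ℤ)) (k0:ℤ), (k:ℝ)^4 * ‖fc f k‖^2
      ≤ ∑ k ∈ Finset.Icc (-(k0:ℤ)) (k0:ℤ), (1 + |(k:ℝ)|^(2*s)) * ‖fc f k‖^2 :=
        Finset.sum_le_sum fun k _ => hterm k
    _ ≤ ∑' k : ℤ, (1 + |(k:ℝ)|^(2*s)) * ‖fc f k‖^2 := by
        refine hsum.sum_le_tsum _ (fun k _ => ?_)
        have h0 : (0:ℝ) ≤ |(k:ℝ)|^(2*s) := Real.rpow_nonneg (abs_nonneg _) _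
        positivity
    _ ≤ A^2 := htsum

lemma abs_c2_le (A s : ℝ) (hs : 2 ≤ s) (f : ℝ → ℝ)
    (hsum : Summable (fun k : ℤ => (1 + |(k:ℝ)| ^ (2*s)) * ‖fc f k‖ ^ 2))
    (htsum : (∑' k : ℤ, (1 + |(k:ℝ)| ^ (2*s)) * ‖fc f k‖ ^ 2) ≤ A ^ 2)
    (k0 : ℕ) (θstar θ : Fin J → ℝ) (a b : Fin J) :
    |c2 f k0 J θstar θ a b|
      ≤ 8*π^4*A^2/(J:ℝ)^2
          * ((θ a - theta0 J θstar a) - (θ b - theta0 J θstar b))^2 := by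
  set dd : ℝ := (θ a - theta0 J θstar a) - (θ b - theta0 J θstar b) with hdd
  have hterm : ∀ k : ℤ,
      |(‖fc f k‖ ^ 2 / (J:ℝ)^2) * (2*π*(k:ℝ))^2
        * (Real.cos ((2*π*(k:ℝ)) * (θ a - θ b) + (-(2*π*(k:ℝ))) * (θstar a - θstar b)) - 1)|
      ≤ 8*π^4/(J:ℝ)^2 * ((k:ℝ)^4 * ‖fc f k‖^2) * dd^2 := by
    intro k
    have ht : (2*π*(k:ℝ)) * (θ a - θ b) + (-(2*π*(k:ℝ))) * (θstar a - θstar b)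
        = 2*π*(k:ℝ)*dd := by
      rw [hdd]; simp only [theta0]; ring
    rw [ht]
    have hcos : |Real.cos (2*π*(k:ℝ)*dd) - 1| ≤ (2*π*(k:ℝ)*dd)^2/2 := by
      have h1 := Real.one_sub_sq_div_two_le_cos (x := 2*π*(k:ℝ)*dd)
      have h2 := Real.cos_le_one (2*π*(k:ℝ)*dd)
      rw [abs_le]; constructor <;> nlinarith [sq_nonneg (2*π*(k:ℝ)*dd)]
    calc |(‖fc f k‖ ^ 2 / (J:ℝ)^2) * (2*π*(k:ℝ))^2
          * (Real.cos (2*π*(k:ℝ)*dd) - 1)|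
        = (‖fc f k‖ ^ 2 / (J:ℝ)^2) * (2*π*(k:ℝ))^2
            * |Real.cos (2*π*(k:ℝ)*dd) - 1| := by
          rw [abs_mul, abs_of_nonneg (by positivity : (0:ℝ) ≤ (‖fc f k‖ ^ 2 / (J:ℝ)^2) * (2*π*(k:ℝ))^2)]
      _ ≤ (‖fc f k‖ ^ 2 / (J:ℝ)^2) * (2*π*(k:ℝ))^2 * ((2*π*(k:ℝ)*dd)^2/2) := by
          apply mul_le_mul_of_nonneg_left hcos (by positivity)
      _ = 8*π^4/(J:ℝ)^2 * ((k:ℝ)^4 * ‖fc f k‖^2) * dd^2 := by ring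
  calc |c2 f k0 J θstar θ a b|
      ≤ ∑ k ∈ Finset.Icc (-(k0:ℤ)) (k0:ℤ),
          |(‖fc f k‖ ^ 2 / (J:ℝ)^2) * (2*π*(k:ℝ))^2
            * (Real.cos ((2*π*(k:ℝ)) * (θ a - θ b) + (-(2*π*(k:ℝ))) * (θstar a - θstar b)) - 1)| :=
        Finset.abs_sum_le_sum_abs _ _
    _ ≤ ∑ k ∈ Finset.Icc (-(k0:ℤ)) (k0:ℤ),
          8*π^4/(J:ℝ)^2 * ((k:ℝ)^4 * ‖fc f k‖^2) * dd^2 :=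
        Finset.sum_le_sum fun k _ => hterm k
    _ = 8*π^4/(J:ℝ)^2 * dd^2
          * ∑ k ∈ Finset.Icc (-(k0:ℤ)) (k0:ℤ), (k:ℝ)^4 * ‖fc f k‖^2 := by
        rw [Finset.mul_sum]
        exact Finset.sum_congr rfl fun k _ => by ring
    _ ≤ 8*π^4/(J:ℝ)^2 * dd^2 * A^2 := by
        apply mul_le_mul_of_nonneg_left (sum_k4_le A s hs f hsum htsum k0) (by positivity)
    _ = 8*π^4*A^2/(J:ℝ)^2 * dd^2 := by ring

lemma opNorm_le (B : Fin J → Fin J → ℝ) (R : ℝ) (hR : 0 ≤ R)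
    (hrow : ∀ i, ∑ j, |B i j| ≤ R) (hcol : ∀ j, ∑ i, |B i j| ≤ R) :
    opNorm B ≤ R := by
  apply Real.sSup_le _ hR
  rintro y ⟨v, hv, rfl⟩
  simp only [Set.mem_setOf_eq] at hv
  have hv0 : ∀ j, 0 ≤ v j ^ 2 := fun j => sq_nonneg _
  have h1 : ∀ i, (∑ j, B i j * v j) ^ 2 ≤ R * ∑ j, |B i j| * v j ^ 2 := by
    intro i
    have e1 : (∑ j, B i j * v j) ^ 2 ≤ (∑ j, |B i j * v j|) ^ 2 := by
      calc (∑ j, B i j * v j) ^ 2 = |∑ j, B i j * v j| ^ 2 := (sq_abs _).symm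
        _ ≤ (∑ j, |B i j * v j|) ^ 2 := by
            apply pow_le_pow_left₀ (abs_nonneg _) (Finset.abs_sum_le_sum_abs _ _)
    have e2 : (∑ j, |B i j * v j|) ^ 2 ≤ (∑ j, |B i j|) * ∑ j, |B i j| * v j ^ 2 := by
      have := Finset.sum_mul_sq_le_sq_mul_sq Finset.univ
        (fun j => Real.sqrt |B i j|) (fun j => Real.sqrt |B i j| * |v j|)
      calc (∑ j, |B i j * v j|) ^ 2
          = (∑ j, Real.sqrt |B i j| * (Real.sqrt |B i j| * |v j|)) ^ 2 := by
            congr 1; refine Finset.sum_congr rfl fun j _ => ?_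
            rw [← mul_assoc, Real.mul_self_sqrt (abs_nonneg _), abs_mul]
        _ ≤ (∑ j, Real.sqrt |B i j| ^ 2) * ∑ j, (Real.sqrt |B i j| * |v j|) ^ 2 := this
        _ = (∑ j, |B i j|) * ∑ j, |B i j| * v j ^ 2 := by
            congr 1
            · exact Finset.sum_congr rfl fun j _ => Real.sq_sqrt (abs_nonneg _)
            · refine Finset.sum_congr rfl fun j _ => ?_
              rw [mul_pow, Real.sq_sqrt (abs_nonneg _), sq_abs]
    calc (∑ j, B i j * v j) ^ 2 ≤ (∑ j, |B i j|) * ∑ j, |B i j| * v j ^ 2 := e1.trans e2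
      _ ≤ R * ∑ j, |B i j| * v j ^ 2 := by
          apply mul_le_mul_of_nonneg_right (hrow i)
          exact Finset.sum_nonneg fun j _ => mul_nonneg (abs_nonneg _) (hv0 j)
  have h2 : ∑ i, (∑ j, B i j * v j) ^ 2 ≤ R ^ 2 := by
    calc ∑ i, (∑ j, B i j * v j) ^ 2 ≤ ∑ i, R * ∑ j, |B i j| * v j ^ 2 :=
        Finset.sum_le_sum fun i _ => h1 i
      _ = R * ∑ j, v j ^ 2 * ∑ i, |B i j| := by
          rw [← Finset.mul_sum, Finset.sum_comm]
          congr 1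
          refine Finset.sum_congr rfl fun j _ => ?_
          rw [Finset.mul_sum]
          refine Finset.sum_congr rfl fun i _ => by ring
      _ ≤ R * ∑ j, v j ^ 2 * R := by
          apply mul_le_mul_of_nonneg_left _ hR
          exact Finset.sum_le_sum fun j _ => mul_le_mul_of_nonneg_left (hcol j) (hv0 j)
      _ = R * R * ∑ j, v j ^ 2 := by rw [← Finset.sum_mul]; ring
      _ ≤ R * R * 1 := by
          apply mul_le_mul_of_nonneg_left hv (mul_nonneg hR hR)
      _ = R ^ 2 := by ring
  calc Real.sqrt (∑ i, (∑ j, B i j * v j) ^ 2) ≤ Real.sqrt (R ^ 2) := Real.sqrt_le_sqrt h2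
    _ = R := Real.sqrt_sq hR

lemma row_sum_arith (hJ : 0 < J) (c : Fin J → Fin J → ℝ) (d : Fin J → ℝ) (C : ℝ) (hC : 0 ≤ C)
    (hc : ∀ a b, |c a b| ≤ C * (d a - d b) ^ 2) (hdsum : ∑ j, d j = 0) (i : Fin J) :
    ∑ j, |∑ a : Fin J, ∑ b : Fin J, c a b * ((Efun a i - Efun b i) * (Efun a j - Efun b j))|
      ≤ 8 * C * (J:ℝ) * ∑ j, d j ^ 2 := by
  have hD0 : (0:ℝ) ≤ ∑ j, d j ^ 2 := Finset.sum_nonneg fun j _ => sq_nonneg _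
  have hdi : ∀ a, d a ^ 2 ≤ ∑ j, d j ^ 2 := fun a =>
    Finset.single_le_sum (fun j _ => sq_nonneg (d j)) (Finset.mem_univ a)
  have hsb : ∑ b, (d i - d b) ^ 2 ≤ 2 * (J:ℝ) * ∑ j, d j ^ 2 := by
    have e : ∑ b, (d i - d b) ^ 2
        = (J:ℝ) * d i ^ 2 - 2 * d i * (∑ b, d b) + ∑ b, d b ^ 2 := by
      have h1 : ∀ b : Fin J, (d i - d b) ^ 2 = d i ^ 2 - 2 * d i * d b + d b ^ 2 :=
        fun b => by ring
      rw [Finset.sum_congr rfl fun b _ => h1 b, Finset.sum_add_distrib, Finset.sum_sub_distrib,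
        Finset.sum_const, Finset.card_univ, Fintype.card_fin, nsmul_eq_mul, ← Finset.mul_sum]
    rw [e, hdsum]
    have h2 := hdi i
    have hJ1 : (1:ℝ) ≤ (J:ℝ) := by exact_mod_cast hJ
    nlinarith [hD0]
  have habs : ∀ j, |∑ a : Fin J, ∑ b : Fin J, c a b * ((Efun a i - Efun b i) * (Efun a j - Efun b j))|
      ≤ ∑ a : Fin J, ∑ b : Fin J, |c a b| * ((Efun a i + Efun b i) * (Efun a j + Efun b j)) := by
    intro j
    refine (Finset.abs_sum_le_sum_abs _ _).trans (Finset.sum_le_sum fun a _ => ?_)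
    refine (Finset.abs_sum_le_sum_abs _ _).trans (Finset.sum_le_sum fun b _ => ?_)
    rw [abs_mul, abs_mul]
    exact mul_le_mul_of_nonneg_left
      (mul_le_mul (Efun_abs_sub a b i) (Efun_abs_sub a b j) (abs_nonneg _)
        (add_nonneg (Efun_nonneg _ _) (Efun_nonneg _ _))) (abs_nonneg _)
  have h3 : ∀ a b : Fin J, |c a b| * (Efun a i + Efun b i) * 2
      = 2 * (|c a b| * Efun a i) + 2 * (|c a b| * Efun b i) := fun a b => by ring
  calc ∑ j, |∑ a : Fin J, ∑ b : Fin J, c a b * ((Efun a i - Efun b i) * (Efun a j - Efun b j))|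
      ≤ ∑ j, ∑ a : Fin J, ∑ b : Fin J,
          |c a b| * ((Efun a i + Efun b i) * (Efun a j + Efun b j)) :=
        Finset.sum_le_sum fun j _ => habs j
    _ = ∑ a : Fin J, ∑ b : Fin J, |c a b| * (Efun a i + Efun b i) * 2 := by
        rw [Finset.sum_comm]
        refine Finset.sum_congr rfl fun a _ => ?_
        rw [Finset.sum_comm]
        refine Finset.sum_congr rfl fun b _ => ?_
        have e5 : ∑ j, |c a b| * ((Efun a i + Efun b i) * (Efun a j + Efun b j))
            = |c a b| * (Efun a i + Efun b i) * ∑ j, (Efun a j + Efun b j) := by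
          rw [Finset.mul_sum]; exact Finset.sum_congr rfl fun j _ => by ring
        rw [e5, Finset.sum_add_distrib, sum_Efun, sum_Efun]; norm_num
    _ = 2 * (∑ a, (∑ b, |c a b|) * Efun a i) + 2 * (∑ a : Fin J, ∑ b : Fin J, |c a b| * Efun b i) := by
        simp only [h3, Finset.sum_add_distrib]
        rw [Finset.mul_sum, Finset.mul_sum]
        congr 1
        · refine Finset.sum_congr rfl fun a _ => ?_
          rw [Finset.sum_mul, Finset.mul_sum]
        · refine Finset.sum_congr rfl fun a _ => ?_
          rw [Finset.mul_sum]
    _ = 2 * (∑ b, |c i b|) + 2 * (∑ a, |c a i|) := by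
        rw [sum_mul_Efun i (fun a => ∑ b, |c a b|)]
        congr 1
        rw [Finset.mul_sum, Finset.mul_sum]
        refine Finset.sum_congr rfl fun a _ => ?_
        rw [sum_mul_Efun i (fun b => |c a b|)]
    _ ≤ 2 * (∑ b, C * (d i - d b) ^ 2) + 2 * (∑ a, C * (d a - d i) ^ 2) := by
        apply add_le_add
        · exact mul_le_mul_of_nonneg_left (Finset.sum_le_sum fun b _ => hc i b) (by norm_num)
        · exact mul_le_mul_of_nonneg_left (Finset.sum_le_sum fun a _ => hc a i) (by norm_num)
    _ = 4 * C * ∑ b, (d i - d b) ^ 2 := by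
        have e4 : ∑ a, C * (d a - d i) ^ 2 = ∑ a, C * (d i - d a) ^ 2 :=
          Finset.sum_congr rfl fun a _ => by ring
        rw [e4, ← Finset.mul_sum]
        ring
    _ ≤ 4 * C * (2 * (J:ℝ) * ∑ j, d j ^ 2) := by
        apply mul_le_mul_of_nonneg_left hsb (by positivity)
    _ = 8 * C * (J:ℝ) * ∑ j, d j ^ 2 := by ring

lemma row_bound (A s : ℝ) (hA : 0 < A) (hs : 2 ≤ s) (f : ℝ → ℝ)
    (hsum : Summable (fun k : ℤ => (1 + |(k:ℝ)| ^ (2*s)) * ‖fc f k‖ ^ 2))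
    (htsum : (∑' k : ℤ, (1 + |(k:ℝ)| ^ (2*s)) * ‖fc f k‖ ^ 2) ≤ A ^ 2)
    (k0 : ℕ) (hJ : 0 < J) (θstar θ : Fin J → ℝ) (hθ : ∑ j, θ j = 0) (i : Fin J) :
    ∑ j, |hess (Mpop f k0 J θstar) θ i j - hess (Mpop f k0 J θstar) (theta0 J θstar) i j|
      ≤ 64 * π ^ 4 * A ^ 2 / (J:ℝ) * ∑ j, (θ j - theta0 J θstar j) ^ 2 := by
  have hJR : (J:ℝ) ≠ 0 := Nat.cast_ne_zero.mpr hJ.ne'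
  have hdsum : ∑ j, (θ j - theta0 J θstar j) = 0 := by
    rw [Finset.sum_sub_distrib, hθ]
    simp only [theta0]
    rw [Finset.sum_sub_distrib, Finset.sum_const, Finset.card_univ, Fintype.card_fin,
      nsmul_eq_mul]
    field_simp
    simp
  have h := row_sum_arith hJ (c2 f k0 J θstar θ) (fun j => θ j - theta0 J θstar j)
    (8 * π ^ 4 * A ^ 2 / (J:ℝ) ^ 2) (by positivity)
    (fun a b => abs_c2_le A s hs f hsum htsum k0 θstar θ a b) hdsum i
  calc ∑ j, |hess (Mpop f k0 J θstar) θ i j - hess (Mpop f k0 J θstar) (theta0 J θstar) i j|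
      = ∑ j, |∑ a : Fin J, ∑ b : Fin J,
          c2 f k0 J θstar θ a b * ((Efun a i - Efun b i) * (Efun a j - Efun b j))| :=
        Finset.sum_congr rfl fun j _ => by rw [hessdiff_eq f k0 hJ θstar θ i j]
    _ ≤ 8 * (8 * π ^ 4 * A ^ 2 / (J:ℝ) ^ 2) * (J:ℝ) * ∑ j, (θ j - theta0 J θstar j) ^ 2 := by
        simpa using h
    _ = 64 * π ^ 4 * A ^ 2 / (J:ℝ) * ∑ j, (θ j - theta0 J θstar j) ^ 2 := by
        field_simp
        ring

end HessAux

/-- **Lemma (Lipschitz-type bound for the Hessian of the population criterion).**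
For `f ∈ W̃_s(A,c_*)` with `s ≥ 2`, `k₀ ≥ 1`, and every `θ ∈ ℝ^J` with `∑_j θ_j = 0`:
`‖∇²M(θ) - ∇²M(θ⁰)‖_op ≤ (64π⁴A²/J) ‖θ - θ⁰‖²`. -/
theorem population_criterion_hessian_lipschitz
    (A s cstar : ℝ) (hA : 0 < A) (hs : 2 ≤ s) (hcstar : 0 < cstar)
    (f : ℝ → ℝ) (hf : f ∈ sobolevBall s A cstar)
    (k0 J : ℕ) (hk0 : 1 ≤ k0) (θstar : Fin J → ℝ)
    (θ : Fin J → ℝ) (hθ : ∑ j, θ j = 0) :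
    opNorm (fun i j =>
        hess (Mpop f k0 J θstar) θ i j - hess (Mpop f k0 J θstar) (theta0 J θstar) i j)
      ≤ (64 * Real.pi^4 * A^2 / J) * ∑ j, (θ j - theta0 J θstar j) ^ 2 := by
  obtain ⟨-, -, -, hsum, htsum, -⟩ := hf
  rcases Nat.eq_zero_or_pos J with hJ0 | hJ
  · subst hJ0
    have h0 := HessAux.opNorm_le (J := 0)
      (fun i j => hess (Mpop f k0 0 θstar) θ i j - hess (Mpop f k0 0 θstar) (theta0 0 θstar) i j)
      0 le_rfl (fun i => i.elim0) (fun j => j.elim0)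
    simpa using h0
  · have hrow : ∀ i, ∑ j, |hess (Mpop f k0 J θstar) θ i j
        - hess (Mpop f k0 J θstar) (theta0 J θstar) i j|
        ≤ 64 * Real.pi ^ 4 * A ^ 2 / (J:ℝ) * ∑ j, (θ j - theta0 J θstar j) ^ 2 :=
      fun i => HessAux.row_bound A s hA hs f hsum htsum k0 hJ θstar θ hθ i
    have hcol : ∀ j, ∑ i, |hess (Mpop f k0 J θstar) θ i j
        - hess (Mpop f k0 J θstar) (theta0 J θstar) i j|
        ≤ 64 * Real.pi ^ 4 * A ^ 2 / (J:ℝ) * ∑ j, (θ j - theta0 J θstar j) ^ 2 := by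
      intro j
      have e : ∑ i, |hess (Mpop f k0 J θstar) θ i j
          - hess (Mpop f k0 J θstar) (theta0 J θstar) i j|
          = ∑ i, |hess (Mpop f k0 J θstar) θ j i
          - hess (Mpop f k0 J θstar) (theta0 J θstar) j i| :=
        Finset.sum_congr rfl fun i _ => by
          rw [HessAux.hessdiff_symm f k0 hJ θstar θ i j]
      rw [e]
      exact hrow j
    have hR : 0 ≤ 64 * Real.pi ^ 4 * A ^ 2 / (J:ℝ) * ∑ j, (θ j - theta0 J θstar j) ^ 2 := by
      apply mul_nonneg (div_nonneg (by positivity) (Nat.cast_nonneg J))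
      exact Finset.sum_nonneg fun j _ => sq_nonneg _
    exact HessAux.opNorm_le _ _ hR hrow hcol

end
end
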